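/- The theory E₁ ∪ (Assigned Validity) is upgeneric, where E₁ consists of all universal closures of Kφ for valid L_EA-formulas φ, and Assigned Validity consists of all sentences φ^s where φ is a valid L_EA-formula and s is an assignment into ℕ. -/

import Mathlib

set_option maxHeartbeats 1000000

namespace FCT

/-- Terms of the language `L_PA = (0, S, +, ·)`.  Variables are indexed by `ℕ`. -/
inductive Term : Type where
  | var : ℕ → Term
  | zero : Term
  | succ : Term → Term
  | add : Term → Term → Term
  | mul : Term → Term → Term

/-- Formulas of `L_PA` extended by a family of unary operators indexed by `Op`
(the base logic).  `op K φ` is the formula `Kφ`. -/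
inductive Formula (Op : Type) : Type where
  | eq : Term → Term → Formula Op
  | imp : Formula Op → Formula Op → Formula Op
  | not : Formula Op → Formula Op
  | all : ℕ → Formula Op → Formula Op
  | op : Op → Formula Op → Formula Op

/-- The ordinals below `ω·ω`, encoded as pairs: `(a, b)` represents `ω·a + b`,
with the lexicographic order. -/
abbrev Ord2 : Type := ℕ ×ₗ ℕ

/-- The ordinal `ω·a + b` as an element of `Ord2`. -/
def omul (a b : ℕ) : Ord2 := toLex (a, b)

/-- Formulas of `L_EA`: one operator `K`. -/
abbrev LEA : Type := Formula Unit

/-- Formulas of `L_{ω·ω}`: operators `K^α` for `α < ω·ω`. -/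
abbrev LOO : Type := Formula Ord2

/-- `Kφ` in `L_EA`. -/
def KK (φ : LEA) : LEA := .op () φ

/-- Variables occurring in a term. -/
def Term.vars : Term → Set ℕ
  | .var x => {x}
  | .zero => ∅
  | .succ t => t.vars
  | .add t u => t.vars ∪ u.vars
  | .mul t u => t.vars ∪ u.vars

/-- Free variables of a formula (`FV(Kφ) = FV(φ)`). -/
def Formula.free {Op : Type} : Formula Op → Set ℕ
  | .eq t u => t.vars ∪ u.vars
  | .imp φ ψ => φ.free ∪ ψ.free
  | .not φ => φ.free
  | .all x φ => φ.free \ {x}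
  | .op _ φ => φ.free

/-- A sentence is a formula with no free variables. -/
def Formula.IsSentence {Op : Type} (φ : Formula Op) : Prop := φ.free = ∅

/-- A theory is a set of sentences. -/
def IsTheory {Op : Type} (T : Set (Formula Op)) : Prop := ∀ φ ∈ T, φ.IsSentence

/-- Substitution of the term `u` for the variable `x` in a term. -/
def Term.subst (x : ℕ) (u : Term) : Term → Term
  | .var y => if y = x then u else .var y
  | .zero => .zero
  | .succ t => .succ (Term.subst x u t)
  | .add t₁ t₂ => .add (Term.subst x u t₁) (Term.subst x u t₂)
  | .mul t₁ t₂ => .mul (Term.subst x u t₁) (Term.subst x u t₂)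

/-- Substitution `φ(x|u)` of the term `u` for all free occurrences of `x` in `φ`. -/
def Formula.subst {Op : Type} (x : ℕ) (u : Term) : Formula Op → Formula Op
  | .eq t₁ t₂ => .eq (Term.subst x u t₁) (Term.subst x u t₂)
  | .imp φ ψ => .imp (Formula.subst x u φ) (Formula.subst x u ψ)
  | .not φ => .not (Formula.subst x u φ)
  | .all y φ => if y = x then .all y φ else .all y (Formula.subst x u φ)
  | .op K φ => .op K (Formula.subst x u φ)

/-- The term `u` is substitutable for the variable `x` in the formula. -/
def Formula.Substitutable {Op : Type} (x : ℕ) (u : Term) : Formula Op → Prop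
  | .eq _ _ => True
  | .imp φ ψ => φ.Substitutable x u ∧ ψ.Substitutable x u
  | .not φ => φ.Substitutable x u
  | .all y φ => x = y ∨ x ∉ φ.free ∨ (y ∉ u.vars ∧ φ.Substitutable x u)
  | .op _ φ => φ.Substitutable x u

/-- Matching of two variables relative to a list of pairs of renamed bound variables. -/
def varMatch : List (ℕ × ℕ) → ℕ → ℕ → Prop
  | [], x, y => x = y
  | (a, b) :: ρ, x, y => (x = a ∧ y = b) ∨ (x ≠ a ∧ y ≠ b ∧ varMatch ρ x y)

/-- Alphabetic matching of terms relative to a list of pairs of renamed bound variables. -/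
def Term.alpha (ρ : List (ℕ × ℕ)) : Term → Term → Prop
  | .var x, .var y => varMatch ρ x y
  | .zero, .zero => True
  | .succ t, .succ u => t.alpha ρ u
  | .add t₁ t₂, .add u₁ u₂ => t₁.alpha ρ u₁ ∧ t₂.alpha ρ u₂
  | .mul t₁ t₂, .mul u₁ u₂ => t₁.alpha ρ u₁ ∧ t₂.alpha ρ u₂
  | _, _ => False

/-- Alphabetic matching of formulas relative to a list of pairs of renamed bound variables. -/
def Formula.alpha {Op : Type} (ρ : List (ℕ × ℕ)) : Formula Op → Formula Op → Prop
  | .eq t₁ t₂, .eq u₁ u₂ => t₁.alpha ρ u₁ ∧ t₂.alpha ρ u₂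
  | .imp φ₁ φ₂, .imp ψ₁ ψ₂ => φ₁.alpha ρ ψ₁ ∧ φ₂.alpha ρ ψ₂
  | .not φ, .not ψ => φ.alpha ρ ψ
  | .all x φ, .all y ψ => φ.alpha ((x, y) :: ρ) ψ
  | .op K φ, .op K' ψ => K = K' ∧ φ.alpha ρ ψ
  | _, _ => False

/-- `ψ` is an alphabetic variant of `φ`: it is obtained from `φ` by renaming
bound variables while respecting the binding of the quantifiers. -/
def Formula.AlphaVariant {Op : Type} (φ ψ : Formula Op) : Prop := φ.alpha [] ψ

/-- The data of a structure for the base logic over `L_PA` extended by the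
operators `Op`: a first-order part together with a truth valuation
`opSat K φ s` ("`M ⊨ Kφ[s]`") for operator-prefixed formulas. -/
structure PreStruc (Op : Type) : Type 1 where
  U : Type
  zero : U
  succ : U → U
  add : U → U → U
  mul : U → U → U
  opSat : Op → Formula Op → (ℕ → U) → Prop

/-- Evaluation of terms. -/
def Term.eval {Op : Type} (M : PreStruc Op) (s : ℕ → M.U) : Term → M.U
  | .var x => s x
  | .zero => M.zero
  | .succ t => M.succ (t.eval M s)
  | .add t u => M.add (t.eval M s) (u.eval M s)
  | .mul t u => M.mul (t.eval M s) (u.eval M s)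

/-- Satisfaction `M ⊨ φ[s]`: as in first-order logic on non-operator formulas,
and given by `opSat` on operator-prefixed formulas. -/
def Sat {Op : Type} (M : PreStruc Op) : Formula Op → (ℕ → M.U) → Prop
  | .eq t u, s => t.eval M s = u.eval M s
  | .imp φ ψ, s => Sat M φ s → Sat M ψ s
  | .not φ, s => ¬ Sat M φ s
  | .all x φ, s => ∀ a : M.U, Sat M φ (Function.update s x a)
  | .op K φ, s => M.opSat K φ s

/-- `M` is a genuine structure of the base logic: its operator valuation
(1) depends only on the values of the assignment on the free variables,
(2) is invariant under renaming of bound variables, and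
(3) satisfies weak substitution. -/
def IsStruc {Op : Type} (M : PreStruc Op) : Prop :=
  (∀ (K : Op) (φ : Formula Op) (s t : ℕ → M.U),
      (∀ x ∈ φ.free, s x = t x) → (M.opSat K φ s ↔ M.opSat K φ t)) ∧
  (∀ (K : Op) (φ ψ : Formula Op) (s : ℕ → M.U),
      φ.AlphaVariant ψ → (M.opSat K φ s ↔ M.opSat K ψ s)) ∧
  (∀ (K : Op) (φ : Formula Op) (x y : ℕ) (s : ℕ → M.U),
      φ.Substitutable x (.var y) →
      (M.opSat K (φ.subst x (.var y)) s ↔ M.opSat K φ (Function.update s x (s y))))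

/-- A formula is valid if it holds in every structure under every assignment. -/
def Valid {Op : Type} (φ : Formula Op) : Prop :=
  ∀ M : PreStruc Op, IsStruc M → ∀ s : ℕ → M.U, Sat M φ s

/-- `T ⊨ φ`: every structure satisfying all members of `T` (under every
assignment) satisfies `φ` under every assignment. -/
def Models {Op : Type} (T : Set (Formula Op)) (φ : Formula Op) : Prop :=
  ∀ M : PreStruc Op, IsStruc M → (∀ ψ ∈ T, ∀ s : ℕ → M.U, Sat M ψ s) →
    ∀ s : ℕ → M.U, Sat M φ s

/-- `M ⊨ T`. -/
def SatTheory {Op : Type} (M : PreStruc Op) (T : Set (Formula Op)) : Prop :=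
  ∀ φ ∈ T, ∀ s : ℕ → M.U, Sat M φ s

/-- The numeral `n̄`. -/
def numeral : ℕ → Term
  | 0 => .zero
  | n + 1 => .succ (numeral n)

/-- Helper for `φ^s`: replace every free occurrence of a variable `x` not in the
list `B` of bound variables by the numeral for `s x`. -/
def Term.numSub (s : ℕ → ℕ) (B : List ℕ) : Term → Term
  | .var x => if x ∈ B then .var x else numeral (s x)
  | .zero => .zero
  | .succ t => .succ (t.numSub s B)
  | .add t u => .add (t.numSub s B) (u.numSub s B)
  | .mul t u => .mul (t.numSub s B) (u.numSub s B)

/-- Helper for `φ^s` (carrying the list of bound variables). -/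
def Formula.numSub {Op : Type} (s : ℕ → ℕ) : List ℕ → Formula Op → Formula Op
  | B, .eq t u => .eq (t.numSub s B) (u.numSub s B)
  | B, .imp φ ψ => .imp (φ.numSub s B) (ψ.numSub s B)
  | B, .not φ => .not (φ.numSub s B)
  | B, .all x φ => .all x (φ.numSub s (x :: B))
  | B, .op K φ => .op K (φ.numSub s B)

/-- `φ^s`: the sentence obtained by substituting the numeral for `s x` for each
free occurrence of each variable `x` in `φ`. -/
def assignSub {Op : Type} (s : ℕ → ℕ) (φ : Formula Op) : Formula Op :=
  φ.numSub s []

/-- The intended structure `𝒩_T` of an `L_EA`-theory `T`: standard first-order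
part and `𝒩_T ⊨ Kφ[s]` iff `T ⊨ φ^s`. -/
def NStruc (T : Set LEA) : PreStruc Unit where
  U := ℕ
  zero := 0
  succ := Nat.succ
  add := (· + ·)
  mul := (· * ·)
  opSat := fun _ φ s => Models T (assignSub s φ)

/-- `T` is true: `𝒩_T ⊨ T`. -/
def TheoryTrue (T : Set LEA) : Prop := SatTheory (NStruc T) T

/-- `On(φ)`: the set of `α < ω·ω` such that `K^α` occurs in `φ`. -/
def Formula.On : LOO → Set Ord2
  | .eq _ _ => ∅
  | .imp φ ψ => φ.On ∪ ψ.On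
  | .not φ => φ.On
  | .all _ φ => φ.On
  | .op α φ => insert α φ.On

/-- `T ∩ α`: the members of `T` all of whose superscripts are `< α`. -/
def cut (T : Set LOO) (α : Ord2) : Set LOO := {φ | φ ∈ T ∧ ∀ β ∈ φ.On, β < α}

/-- The intended structure `𝓜_T` of an `L_{ω·ω}`-theory `T`: standard
first-order part and `𝓜_T ⊨ K^αφ[s]` iff `T∩α ⊨ φ^s`. -/
def MStruc (T : Set LOO) : PreStruc Ord2 where
  U := ℕ
  zero := 0
  succ := Nat.succ
  add := (· + ·)
  mul := (· * ·)
  opSat := fun α φ s => Models (cut T α) (assignSub s φ)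

/-- The least element of a set `A ⊆ ω·ω` (junk value if `A` is empty):
first minimize the `ω`-coefficient, then the finite part. -/
noncomputable def leastIn (A : Set Ord2) : Ord2 :=
  let a := sInf {a : ℕ | ∃ b : ℕ, toLex (a, b) ∈ A}
  toLex (a, sInf {b : ℕ | toLex (a, b) ∈ A})

/-- The stratifier given by `X ⊆ ω·ω`: fixes atomic formulas, commutes with
`→`, `¬`, `∀`, and sends `Kφ₀` to `K^α φ₀⁺` where `α` is the least element of
`X \ On(φ₀⁺)`. -/
noncomputable def stratify (X : Set Ord2) : LEA → LOO
  | .eq t u => .eq t u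
  | .imp φ ψ => .imp (stratify X φ) (stratify X ψ)
  | .not φ => .not (stratify X φ)
  | .all x φ => .all x (stratify X φ)
  | .op _ φ => .op (leastIn (X \ (stratify X φ).On)) (stratify X φ)

/-- A stratifier is the map given by some infinite `X ⊆ ω·ω`. -/
def IsStratifier (f : LEA → LOO) : Prop :=
  ∃ X : Set Ord2, X.Infinite ∧ f = stratify X

/-- `T^⊕ = { φ⁺ : φ ∈ T, ⁺ a stratifier }`. -/
def oplus (T : Set LEA) : Set LOO :=
  {ψ | ∃ φ ∈ T, ∃ f : LEA → LOO, IsStratifier f ∧ ψ = f φ}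

/-- The veristratifier: the stratifier given by `X = {ω·1, ω·2, ω·3, …}`. -/
noncomputable def veristratifier : LEA → LOO :=
  stratify {α : Ord2 | ∃ n : ℕ, α = omul (n + 1) 0}

/-- `φ⁻`: change every `K^α` into `K`. -/
def Formula.down : LOO → LEA
  | .eq t u => .eq t u
  | .imp φ ψ => .imp φ.down ψ.down
  | .not φ => .not φ.down
  | .all x φ => .all x φ.down
  | .op _ φ => .op () φ.down

/-- `M⁺` for an `L_{ω·ω}`-structure `M` and a stratifier `⁺`: same universe and
`L_PA`-part, and `M⁺ ⊨ Kφ[s]` iff `M ⊨ (Kφ)⁺[s]`. -/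
def upStruc (M : PreStruc Ord2) (f : LEA → LOO) : PreStruc Unit where
  U := M.U
  zero := M.zero
  succ := M.succ
  add := M.add
  mul := M.mul
  opSat := fun _ φ s => Sat M (f (.op () φ)) s

/-- `M⁻` for an `L_EA`-structure `M`: same universe and `L_PA`-part, and
`M⁻ ⊨ K^αφ[s]` iff `M ⊨ K(φ⁻)[s]`. -/
def downStruc (M : PreStruc Unit) : PreStruc Ord2 where
  U := M.U
  zero := M.zero
  succ := M.succ
  add := M.add
  mul := M.mul
  opSat := fun _ φ s => Sat M (.op () φ.down) s

open Classical in
/-- `h(φ)`: replace every occurrence of `K^α` with `α ∈ X` by `K^{h(α)}`. -/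
noncomputable def mapOps (X : Set Ord2) (h : Ord2 → Ord2) : LOO → LOO
  | .eq t u => .eq t u
  | .imp φ ψ => .imp (mapOps X h φ) (mapOps X h ψ)
  | .not φ => .not (mapOps X h φ)
  | .all x φ => .all x (mapOps X h φ)
  | .op α φ => .op (if α ∈ X then h α else α) (mapOps X h φ)

/-- `h : X → ω·ω` is order preserving. -/
def OrdPresOn (X : Set Ord2) (h : Ord2 → Ord2) : Prop :=
  ∀ a ∈ X, ∀ b ∈ X, a < b → h a < h b

/-- A uniform `L_{ω·ω}`-theory. -/
def Uniform (T : Set LOO) : Prop :=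
  ∀ (X : Set Ord2) (h : Ord2 → Ord2), OrdPresOn X h →
    ∀ φ ∈ T, φ.On ⊆ X → mapOps X h φ ∈ T

/-- `h(M)`: same universe and `L_PA`-part as `M`, and
`h(M) ⊨ K^αφ[s]` iff `M ⊨ h(K^αφ)[s]`. -/
noncomputable def hStruc (X : Set Ord2) (h : Ord2 → Ord2) (M : PreStruc Ord2) :
    PreStruc Ord2 where
  U := M.U
  zero := M.zero
  succ := M.succ
  add := M.add
  mul := M.mul
  opSat := fun α φ s => Sat M (mapOps X h (.op α φ)) s

/-- The depth of nesting of the operators. -/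
def Formula.depth {Op : Type} : Formula Op → ℕ
  | .eq _ _ => 0
  | .imp φ ψ => max φ.depth ψ.depth
  | .not φ => φ.depth
  | .all _ φ => φ.depth
  | .op _ φ => φ.depth + 1

/-- `∀x₁ ⋯ ∀xₙ φ`. -/
def Formula.alls {Op : Type} : List ℕ → Formula Op → Formula Op
  | [], φ => φ
  | x :: l, φ => .all x (Formula.alls l φ)

/-- `ψ` is a universal closure of `φ`: a sentence of the form `∀x₁ ⋯ ∀xₙ φ`. -/
def IsUClosure {Op : Type} (φ ψ : Formula Op) : Prop :=
  ψ.IsSentence ∧ ∃ l : List ℕ, ψ = Formula.alls l φ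

/-- The schema `E₁`: universal closures of `Kφ`, `φ` valid. -/
def E1 : Set LEA := {χ | ∃ φ : LEA, Valid φ ∧ IsUClosure (KK φ) χ}

/-- The schema `E₂`: universal closures of `K(φ→ψ) → Kφ → Kψ`. -/
def E2 : Set LEA :=
  {χ | ∃ φ ψ : LEA, IsUClosure (.imp (KK (.imp φ ψ)) (.imp (KK φ) (KK ψ))) χ}

/-- The schema `E′₂`: universal closures of `K(φ→ψ) → Kφ → Kψ` with
`depth(φ) ≤ depth(ψ)`. -/
def E2' : Set LEA :=
  {χ | ∃ φ ψ : LEA, φ.depth ≤ ψ.depth ∧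
    IsUClosure (.imp (KK (.imp φ ψ)) (.imp (KK φ) (KK ψ))) χ}

/-- The schema `E₃`: universal closures of `Kφ → φ`. -/
def E3 : Set LEA := {χ | ∃ φ : LEA, IsUClosure (.imp (KK φ) φ) χ}

/-- The Assigned Validity schema: all `φ^s` with `φ` valid, `s : ℕ → ℕ`. -/
def AssignedValidity : Set LEA :=
  {χ | ∃ (φ : LEA) (s : ℕ → ℕ), Valid φ ∧ χ = assignSub s φ}

/-- `K(T₀) = { Kφ : φ ∈ T₀ }`. -/
def KSet (T : Set LEA) : Set LEA := {χ | ∃ φ ∈ T, χ = KK φ}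

/-- Membership in the smallest `K`-closed set containing `S`. -/
inductive KClosureMem (S : Set LEA) : LEA → Prop
  | base {φ : LEA} : φ ∈ S → KClosureMem S φ
  | k {φ : LEA} : KClosureMem S φ → KClosureMem S (KK φ)

/-- The smallest `K`-closed theory containing `S`. -/
def KClosure (S : Set LEA) : Set LEA := {φ | KClosureMem S φ}

/-- `T₀` is upgeneric: `𝓜_{T^⊕} ⊨ T₀^⊕` for every `L_EA`-theory `T ⊇ T₀`. -/
def Upgeneric (T₀ : Set LEA) : Prop :=
  ∀ T : Set LEA, IsTheory T → T₀ ⊆ T → SatTheory (MStruc (oplus T)) (oplus T₀)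

/-- A concrete Gödel numbering of terms. -/
def encodeTerm : Term → ℕ
  | .var x => Nat.pair 0 x
  | .zero => Nat.pair 1 0
  | .succ t => Nat.pair 2 (encodeTerm t)
  | .add t u => Nat.pair 3 (Nat.pair (encodeTerm t) (encodeTerm u))
  | .mul t u => Nat.pair 4 (Nat.pair (encodeTerm t) (encodeTerm u))

/-- A concrete Gödel numbering of `L_EA`-formulas. -/
def encodeLEA : LEA → ℕ
  | .eq t u => Nat.pair 0 (Nat.pair (encodeTerm t) (encodeTerm u))
  | .imp φ ψ => Nat.pair 1 (Nat.pair (encodeLEA φ) (encodeLEA ψ))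
  | .not φ => Nat.pair 2 (encodeLEA φ)
  | .all x φ => Nat.pair 3 (Nat.pair x (encodeLEA φ))
  | .op _ φ => Nat.pair 4 (encodeLEA φ)

/-- `T` is recursively enumerable: the set of Gödel numbers of its members is r.e. -/
def RETheory (T : Set LEA) : Prop := REPred fun n => ∃ φ ∈ T, encodeLEA φ = n

/-- `T₀` is r.e.-upgeneric: `T₀` is r.e. and `𝓜_{T^⊕} ⊨ T₀^⊕` for every r.e.
`L_EA`-theory `T ⊇ T₀`. -/
def REUpgeneric (T₀ : Set LEA) : Prop :=
  RETheory T₀ ∧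
    ∀ T : Set LEA, IsTheory T → RETheory T → T₀ ⊆ T →
      SatTheory (MStruc (oplus T)) (oplus T₀)


/-! ### Auxiliary development -/

section Aux

open Classical

/-- Least element lemmas for `leastIn`. -/
lemma leastIn_mem {A : Set Ord2} (h : A.Nonempty) : leastIn A ∈ A := by
  obtain ⟨p, hp⟩ := h
  have h1 : {a : ℕ | ∃ b : ℕ, toLex (a, b) ∈ A}.Nonempty :=
    ⟨(ofLex p).1, (ofLex p).2, hp⟩
  have h2 : {b : ℕ | toLex (sInf {a : ℕ | ∃ b : ℕ, toLex (a, b) ∈ A}, b) ∈ A}.Nonempty := by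
    obtain ⟨b, hb⟩ := Nat.sInf_mem h1
    exact ⟨b, hb⟩
  exact Nat.sInf_mem h2

lemma leastIn_le {A : Set Ord2} {p : Ord2} (h : p ∈ A) : leastIn A ≤ p := by
  have hp : toLex ((ofLex p).1, (ofLex p).2) = p := rfl
  set S := {a : ℕ | ∃ b : ℕ, toLex (a, b) ∈ A} with hS
  have hp1 : (ofLex p).1 ∈ S := ⟨(ofLex p).2, by rw [hp]; exact h⟩
  have h1 : sInf S ≤ (ofLex p).1 := Nat.sInf_le hp1
  show toLex (sInf S, sInf {b : ℕ | toLex (sInf S, b) ∈ A}) ≤ p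
  rcases lt_or_eq_of_le h1 with hlt | heq
  · rw [← hp]
    exact le_of_lt (Prod.Lex.lt_iff.2 (Or.inl hlt))
  · rw [← hp]
    refine Prod.Lex.le_iff.2 (Or.inr ⟨heq, Nat.sInf_le ?_⟩)
    show toLex (sInf S, (ofLex p).2) ∈ A
    rw [heq, hp]
    exact h

/-- Fresh variable supply. -/
lemma exists_fresh (F : Finset ℕ) : ∃ z : ℕ, z ∉ F :=
  ⟨F.sup id + 1, fun h => by
    have := Finset.le_sup (f := id) h
    simp only [id] at this
    omega⟩

/-- Numeral basics. -/
lemma numeral_vars : ∀ n : ℕ, (numeral n).vars = ∅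
  | 0 => rfl
  | n + 1 => by simp [numeral, Term.vars, numeral_vars n]

lemma numSub_numeral (s : ℕ → ℕ) (B : List ℕ) : ∀ n, Term.numSub s B (numeral n) = numeral n
  | 0 => rfl
  | n + 1 => by simp [numeral, Term.numSub, numSub_numeral s B n]

lemma alpha_numeral (ρ : List (ℕ × ℕ)) : ∀ n, Term.alpha ρ (numeral n) (numeral n)
  | 0 => by simp [numeral, Term.alpha]
  | n + 1 => by simpa [numeral, Term.alpha] using alpha_numeral ρ n

end Aux


section Aux2

open Classical

/-- All variables of a term (as a finset). -/
def Term.avars : Term → Finset ℕ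
  | .var x => {x}
  | .zero => ∅
  | .succ t => t.avars
  | .add t u => t.avars ∪ u.avars
  | .mul t u => t.avars ∪ u.avars

/-- All variables of a formula, including binders. -/
def Formula.avars {Op : Type} : Formula Op → Finset ℕ
  | .eq t u => t.avars ∪ u.avars
  | .imp φ ψ => φ.avars ∪ ψ.avars
  | .not φ => φ.avars
  | .all x φ => insert x φ.avars
  | .op _ φ => φ.avars

lemma Term.vars_subset_avars : ∀ a : Term, ∀ u ∈ a.vars, u ∈ a.avars := by
  intro a
  induction a with
  | var x => intro u hu; simp [Term.vars] at hu; simp [Term.avars, hu]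
  | zero => intro u hu; simp [Term.vars] at hu
  | succ t ih => intro u hu; exact ih u hu
  | add t₁ t₂ ih₁ ih₂ =>
    intro u hu
    rcases hu with hu | hu
    · exact Finset.mem_union_left _ (ih₁ u hu)
    · exact Finset.mem_union_right _ (ih₂ u hu)
  | mul t₁ t₂ ih₁ ih₂ =>
    intro u hu
    rcases hu with hu | hu
    · exact Finset.mem_union_left _ (ih₁ u hu)
    · exact Finset.mem_union_right _ (ih₂ u hu)

lemma Formula.free_subset_avars {Op : Type} : ∀ φ : Formula Op, ∀ u ∈ φ.free, u ∈ φ.avars := by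
  intro φ
  induction φ with
  | eq t₁ t₂ =>
    intro u hu
    rcases hu with hu | hu
    · exact Finset.mem_union_left _ (Term.vars_subset_avars _ u hu)
    · exact Finset.mem_union_right _ (Term.vars_subset_avars _ u hu)
  | imp φ₁ φ₂ ih₁ ih₂ =>
    intro u hu
    rcases hu with hu | hu
    · exact Finset.mem_union_left _ (ih₁ u hu)
    · exact Finset.mem_union_right _ (ih₂ u hu)
  | not φ ih => exact ih
  | all x φ ih =>
    intro u hu
    exact Finset.mem_insert_of_mem (ih u hu.1)
  | op K φ ih => exact ih

/-- `z` does not occur in the list of pairs. -/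
def FreshL (z : ℕ) (ρ : List (ℕ × ℕ)) : Prop := ∀ p ∈ ρ, z ≠ p.1 ∧ z ≠ p.2

lemma FreshL.tail {z : ℕ} {p : ℕ × ℕ} {ρ : List (ℕ × ℕ)} (h : FreshL z (p :: ρ)) :
    FreshL z ρ := fun q hq => h q (List.mem_cons_of_mem _ hq)

lemma varMatch_self {z : ℕ} : ∀ {ρ : List (ℕ × ℕ)}, FreshL z ρ → varMatch ρ z z
  | [], _ => rfl
  | (a, b) :: ρ, h =>
    Or.inr ⟨(h (a, b) (List.mem_cons_self)).1, (h (a, b) (List.mem_cons_self)).2,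
      varMatch_self h.tail⟩

lemma varMatch_right_of_left {z : ℕ} : ∀ {ρ : List (ℕ × ℕ)} {v : ℕ},
    FreshL z ρ → varMatch ρ z v → v = z
  | [], v, _, h => h.symm
  | (a, b) :: ρ, v, hf, h => by
    rcases h with ⟨h1, h2⟩ | ⟨h1, h2, h3⟩
    · exact absurd h1 (hf (a, b) (List.mem_cons_self)).1
    · exact varMatch_right_of_left hf.tail h3

lemma varMatch_left_of_right {z : ℕ} : ∀ {ρ : List (ℕ × ℕ)} {u : ℕ},
    FreshL z ρ → varMatch ρ u z → u = z
  | [], u, _, h => h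
  | (a, b) :: ρ, u, hf, h => by
    rcases h with ⟨h1, h2⟩ | ⟨h1, h2, h3⟩
    · exact absurd h2 (hf (a, b) (List.mem_cons_self)).2
    · exact varMatch_left_of_right hf.tail h3

lemma varMatch_cons_same {z u v : ℕ} {ρ : List (ℕ × ℕ)} (hf : FreshL z ρ) :
    varMatch ((z, z) :: ρ) u v ↔ varMatch ρ u v := by
  constructor
  · rintro (⟨rfl, rfl⟩ | ⟨h1, h2, h3⟩)
    · exact varMatch_self hf
    · exact h3
  · intro h
    by_cases hu : u = z
    · subst hu
      have := varMatch_right_of_left hf h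
      subst this
      exact Or.inl ⟨rfl, rfl⟩
    · have hv : v ≠ z := by
        intro hv; subst hv
        exact hu (varMatch_left_of_right hf h)
      exact Or.inr ⟨hu, hv, h⟩

lemma varMatch_cons_congr {x y : ℕ} {ρ σ : List (ℕ × ℕ)}
    (h : ∀ u v, varMatch ρ u v ↔ varMatch σ u v) (u v : ℕ) :
    varMatch ((x, y) :: ρ) u v ↔ varMatch ((x, y) :: σ) u v := by
  show (u = x ∧ v = y) ∨ (u ≠ x ∧ v ≠ y ∧ varMatch ρ u v) ↔
    (u = x ∧ v = y) ∨ (u ≠ x ∧ v ≠ y ∧ varMatch σ u v)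
  exact or_congr Iff.rfl (and_congr Iff.rfl (and_congr Iff.rfl (h u v)))

lemma Term.alpha_congr {ρ σ : List (ℕ × ℕ)} (h : ∀ u v, varMatch ρ u v ↔ varMatch σ u v) :
    ∀ a b : Term, a.alpha ρ b → a.alpha σ b := by
  intro a
  induction a with
  | var x =>
    intro b hab
    cases b <;> simp only [Term.alpha] at hab ⊢
    exact (h _ _).1 hab
  | zero => intro b hab; cases b <;> simp only [Term.alpha] at hab ⊢
  | succ t ih =>
    intro b hab
    cases b <;> simp only [Term.alpha] at hab ⊢
    exact ih _ hab
  | add t₁ t₂ ih₁ ih₂ =>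
    intro b hab
    cases b <;> simp only [Term.alpha] at hab ⊢
    exact ⟨ih₁ _ hab.1, ih₂ _ hab.2⟩
  | mul t₁ t₂ ih₁ ih₂ =>
    intro b hab
    cases b <;> simp only [Term.alpha] at hab ⊢
    exact ⟨ih₁ _ hab.1, ih₂ _ hab.2⟩

lemma Formula.alpha_congr {Op : Type} :
    ∀ (φ ψ : Formula Op) (ρ σ : List (ℕ × ℕ)),
      (∀ u v, varMatch ρ u v ↔ varMatch σ u v) → φ.alpha ρ ψ → φ.alpha σ ψ := by
  intro φ
  induction φ with
  | eq t₁ t₂ =>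
    intro ψ ρ σ h hab
    cases ψ <;> simp only [Formula.alpha] at hab ⊢
    exact ⟨Term.alpha_congr h _ _ hab.1, Term.alpha_congr h _ _ hab.2⟩
  | imp φ₁ φ₂ ih₁ ih₂ =>
    intro ψ ρ σ h hab
    cases ψ <;> simp only [Formula.alpha] at hab ⊢
    exact ⟨ih₁ _ _ _ h hab.1, ih₂ _ _ _ h hab.2⟩
  | not φ ih =>
    intro ψ ρ σ h hab
    cases ψ <;> simp only [Formula.alpha] at hab ⊢
    exact ih _ _ _ h hab
  | all x φ ih =>
    intro ψ ρ σ h hab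
    cases ψ <;> simp only [Formula.alpha] at hab ⊢
    exact ih _ _ _ (varMatch_cons_congr h) hab
  | op K φ ih =>
    intro ψ ρ σ h hab
    cases ψ <;> simp only [Formula.alpha] at hab ⊢
    exact ⟨hab.1, ih _ _ _ h hab.2⟩

lemma varMatch_swap : ∀ {ρ : List (ℕ × ℕ)} {u v : ℕ},
    varMatch ρ u v → varMatch (ρ.map Prod.swap) v u
  | [], u, v, h => h.symm
  | (a, b) :: ρ, u, v, h => by
    simp only [List.map_cons, Prod.swap_prod_mk]
    rcases h with ⟨rfl, rfl⟩ | ⟨h1, h2, h3⟩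
    · exact Or.inl ⟨rfl, rfl⟩
    · exact Or.inr ⟨h2, h1, varMatch_swap h3⟩

lemma Term.alpha_swap : ∀ (a b : Term) (ρ : List (ℕ × ℕ)),
    a.alpha ρ b → b.alpha (ρ.map Prod.swap) a := by
  intro a
  induction a with
  | var x =>
    intro b ρ hab
    cases b <;> simp only [Term.alpha] at hab ⊢
    exact varMatch_swap hab
  | zero => intro b ρ hab; cases b <;> simp only [Term.alpha] at hab ⊢
  | succ t ih =>
    intro b ρ hab
    cases b <;> simp only [Term.alpha] at hab ⊢
    exact ih _ _ hab
  | add t₁ t₂ ih₁ ih₂ =>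
    intro b ρ hab
    cases b <;> simp only [Term.alpha] at hab ⊢
    exact ⟨ih₁ _ _ hab.1, ih₂ _ _ hab.2⟩
  | mul t₁ t₂ ih₁ ih₂ =>
    intro b ρ hab
    cases b <;> simp only [Term.alpha] at hab ⊢
    exact ⟨ih₁ _ _ hab.1, ih₂ _ _ hab.2⟩

lemma Formula.alpha_swap {Op : Type} : ∀ (φ ψ : Formula Op) (ρ : List (ℕ × ℕ)),
    φ.alpha ρ ψ → ψ.alpha (ρ.map Prod.swap) φ := by
  intro φ
  induction φ with
  | eq t₁ t₂ =>
    intro ψ ρ hab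
    cases ψ <;> simp only [Formula.alpha] at hab ⊢
    exact ⟨Term.alpha_swap _ _ _ hab.1, Term.alpha_swap _ _ _ hab.2⟩
  | imp φ₁ φ₂ ih₁ ih₂ =>
    intro ψ ρ hab
    cases ψ <;> simp only [Formula.alpha] at hab ⊢
    exact ⟨ih₁ _ _ hab.1, ih₂ _ _ hab.2⟩
  | not φ ih =>
    intro ψ ρ hab
    cases ψ <;> simp only [Formula.alpha] at hab ⊢
    exact ih _ _ hab
  | all x φ ih =>
    intro ψ ρ hab
    cases ψ <;> simp only [Formula.alpha] at hab ⊢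
    exact ih _ _ hab
  | op K φ ih =>
    intro ψ ρ hab
    cases ψ <;> simp only [Formula.alpha] at hab ⊢
    exact ⟨hab.1.symm, ih _ _ hab.2⟩

lemma Term.alpha_mem : ∀ (a b : Term) (ρ : List (ℕ × ℕ)),
    a.alpha ρ b → ∀ u ∈ a.vars, ∃ v ∈ b.vars, varMatch ρ u v := by
  intro a
  induction a with
  | var x =>
    intro b ρ hab u hu
    cases b <;> simp only [Term.alpha] at hab
    case var y =>
      simp only [Term.vars, Set.mem_singleton_iff] at hu
      subst hu
      exact ⟨y, by simp [Term.vars], hab⟩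
  | zero => intro b ρ hab u hu; simp [Term.vars] at hu
  | succ t ih =>
    intro b ρ hab u hu
    cases b <;> simp only [Term.alpha] at hab
    case succ t' => exact ih _ _ hab u hu
  | add t₁ t₂ ih₁ ih₂ =>
    intro b ρ hab u hu
    cases b <;> simp only [Term.alpha] at hab
    case add u₁ u₂ =>
      rcases hu with hu | hu
      · obtain ⟨v, hv, hm⟩ := ih₁ _ _ hab.1 u hu
        exact ⟨v, Set.mem_union_left _ hv, hm⟩
      · obtain ⟨v, hv, hm⟩ := ih₂ _ _ hab.2 u hu
        exact ⟨v, Set.mem_union_right _ hv, hm⟩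
  | mul t₁ t₂ ih₁ ih₂ =>
    intro b ρ hab u hu
    cases b <;> simp only [Term.alpha] at hab
    case mul u₁ u₂ =>
      rcases hu with hu | hu
      · obtain ⟨v, hv, hm⟩ := ih₁ _ _ hab.1 u hu
        exact ⟨v, Set.mem_union_left _ hv, hm⟩
      · obtain ⟨v, hv, hm⟩ := ih₂ _ _ hab.2 u hu
        exact ⟨v, Set.mem_union_right _ hv, hm⟩

lemma Formula.alpha_free {Op : Type} : ∀ (φ ψ : Formula Op) (ρ : List (ℕ × ℕ)),
    φ.alpha ρ ψ → ∀ u ∈ φ.free, ∃ v ∈ ψ.free, varMatch ρ u v := by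
  intro φ
  induction φ with
  | eq t₁ t₂ =>
    intro ψ ρ hab u hu
    cases ψ <;> simp only [Formula.alpha] at hab
    case eq u₁ u₂ =>
      rcases hu with hu | hu
      · obtain ⟨v, hv, hm⟩ := Term.alpha_mem _ _ _ hab.1 u hu
        exact ⟨v, Set.mem_union_left _ hv, hm⟩
      · obtain ⟨v, hv, hm⟩ := Term.alpha_mem _ _ _ hab.2 u hu
        exact ⟨v, Set.mem_union_right _ hv, hm⟩
  | imp φ₁ φ₂ ih₁ ih₂ =>
    intro ψ ρ hab u hu
    cases ψ <;> simp only [Formula.alpha] at hab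
    case imp ψ₁ ψ₂ =>
      rcases hu with hu | hu
      · obtain ⟨v, hv, hm⟩ := ih₁ _ _ hab.1 u hu
        exact ⟨v, Set.mem_union_left _ hv, hm⟩
      · obtain ⟨v, hv, hm⟩ := ih₂ _ _ hab.2 u hu
        exact ⟨v, Set.mem_union_right _ hv, hm⟩
  | not φ ih =>
    intro ψ ρ hab u hu
    cases ψ <;> simp only [Formula.alpha] at hab
    case not ψ₀ => exact ih _ _ hab u hu
  | all x φ ih =>
    intro ψ ρ hab u hu
    cases ψ <;> simp only [Formula.alpha] at hab
    case all y ψ₀ =>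
      obtain ⟨hu1, hu2⟩ := hu
      obtain ⟨v, hv, hm⟩ := ih _ _ hab u hu1
      rcases hm with ⟨h1, h2⟩ | ⟨h1, h2, h3⟩
      · exact absurd h1 hu2
      · exact ⟨v, ⟨hv, h2⟩, h3⟩
  | op K φ ih =>
    intro ψ ρ hab u hu
    cases ψ <;> simp only [Formula.alpha] at hab
    case op K' ψ₀ => exact ih _ _ hab.2 u hu

lemma Formula.alphaVariant_free_eq {Op : Type} {φ ψ : Formula Op}
    (h : φ.AlphaVariant ψ) : φ.free = ψ.free := by
  ext u
  constructor
  · intro hu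
    obtain ⟨v, hv, hm⟩ := Formula.alpha_free φ ψ [] h u hu
    have : u = v := hm
    rwa [this]
  · intro hu
    have h' := Formula.alpha_swap φ ψ [] h
    simp only [List.map_nil] at h'
    obtain ⟨v, hv, hm⟩ := Formula.alpha_free ψ φ [] h' u hu
    have : u = v := hm
    rwa [this]

end Aux2


section Aux3

open Classical

lemma Term.subst_of_not_mem {x : ℕ} {u : Term} : ∀ {a : Term}, x ∉ a.vars → Term.subst x u a = a := by
  intro a
  induction a with
  | var y =>
    intro h
    simp only [Term.vars, Set.mem_singleton_iff] at h
    simp [Term.subst, Ne.symm h]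
  | zero => intro h; rfl
  | succ t ih => intro h; simp [Term.subst, ih h]
  | add t₁ t₂ ih₁ ih₂ =>
    intro h
    simp only [Term.vars, Set.mem_union, not_or] at h
    simp [Term.subst, ih₁ h.1, ih₂ h.2]
  | mul t₁ t₂ ih₁ ih₂ =>
    intro h
    simp only [Term.vars, Set.mem_union, not_or] at h
    simp [Term.subst, ih₁ h.1, ih₂ h.2]

lemma Formula.subst_of_not_free {Op : Type} {x : ℕ} {u : Term} :
    ∀ {φ : Formula Op}, x ∉ φ.free → φ.subst x u = φ := by
  intro φ
  induction φ with
  | eq t₁ t₂ =>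
    intro h
    simp only [Formula.free, Set.mem_union, not_or] at h
    simp [Formula.subst, Term.subst_of_not_mem h.1, Term.subst_of_not_mem h.2]
  | imp φ₁ φ₂ ih₁ ih₂ =>
    intro h
    simp only [Formula.free, Set.mem_union, not_or] at h
    simp [Formula.subst, ih₁ h.1, ih₂ h.2]
  | not φ ih => intro h; simp [Formula.subst, ih h]
  | all y φ ih =>
    intro h
    by_cases hyx : y = x
    · simp [Formula.subst, hyx]
    · simp only [Formula.free, Set.mem_diff, Set.mem_singleton_iff] at h
      push_neg at h
      have : x ∉ φ.free := fun hx => (Ne.symm hyx) (h hx)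
      simp [Formula.subst, hyx, ih this]
  | op K φ ih => intro h; simp [Formula.subst, ih h]

lemma Formula.substitutable_fresh {Op : Type} {x z : ℕ} :
    ∀ {φ : Formula Op}, z ∉ φ.avars → φ.Substitutable x (.var z) := by
  intro φ
  induction φ with
  | eq t₁ t₂ => intro h; trivial
  | imp φ₁ φ₂ ih₁ ih₂ =>
    intro h
    simp only [Formula.avars, Finset.mem_union, not_or] at h
    exact ⟨ih₁ h.1, ih₂ h.2⟩
  | not φ ih => exact ih
  | all y φ ih =>
    intro h
    simp only [Formula.avars, Finset.mem_insert, not_or] at h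
    refine Or.inr (Or.inr ⟨?_, ih h.2⟩)
    simp only [Term.vars, Set.mem_singleton_iff]
    exact fun hy => h.1 hy.symm
  | op K φ ih => exact ih

lemma Term.mem_vars_subst {x z u : ℕ} : ∀ {a : Term},
    (u ∈ (Term.subst x (.var z) a).vars ↔ (u ∈ a.vars ∧ u ≠ x) ∨ (u = z ∧ x ∈ a.vars)) := by
  intro a
  induction a with
  | var v =>
    by_cases hvx : v = x
    · subst hvx
      constructor
      · intro hh
        have : u = z := by simpa [Term.subst, Term.vars] using hh
        exact Or.inr ⟨this, by simp [Term.vars]⟩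
      · rintro (⟨h1, h2⟩ | ⟨h1, h2⟩)
        · exact absurd (by simpa [Term.vars] using h1) h2
        · simp [Term.subst, Term.vars, h1]
    · constructor
      · intro hh
        have : u = v := by simpa [Term.subst, hvx, Term.vars] using hh
        exact Or.inl ⟨by simp [Term.vars, this], this ▸ hvx⟩
      · rintro (⟨h1, h2⟩ | ⟨h1, h2⟩)
        · have : u = v := by simpa [Term.vars] using h1
          simp [Term.subst, hvx, Term.vars, this]
        · have : x = v := by simpa [Term.vars] using h2
          exact absurd this.symm hvx
  | zero => simp [Term.subst, Term.vars]
  | succ t ih => simpa only [Term.subst, Term.vars] using ih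
  | add t₁ t₂ ih₁ ih₂ =>
    simp only [Term.subst, Term.vars, Set.mem_union, ih₁, ih₂]
    tauto
  | mul t₁ t₂ ih₁ ih₂ =>
    simp only [Term.subst, Term.vars, Set.mem_union, ih₁, ih₂]
    tauto

lemma Formula.mem_free_subst {Op : Type} {x z u : ℕ} : ∀ {φ : Formula Op}, z ∉ φ.avars →
    (u ∈ (φ.subst x (.var z)).free ↔ (u ∈ φ.free ∧ u ≠ x) ∨ (u = z ∧ x ∈ φ.free)) := by
  intro φ
  induction φ with
  | eq t₁ t₂ =>
    intro h
    simp only [Formula.subst, Formula.free, Set.mem_union, Term.mem_vars_subst]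
    tauto
  | imp φ₁ φ₂ ih₁ ih₂ =>
    intro h
    simp only [Formula.avars, Finset.mem_union, not_or] at h
    simp only [Formula.subst, Formula.free, Set.mem_union, ih₁ h.1, ih₂ h.2]
    tauto
  | not φ ih => exact ih
  | all w φ ih =>
    intro h
    simp only [Formula.avars, Finset.mem_insert, not_or] at h
    have hzw : z ≠ w := h.1
    by_cases hwx : w = x
    · subst hwx
      simp only [Formula.subst, if_pos rfl, Formula.free, Set.mem_diff,
        Set.mem_singleton_iff]
      constructor
      · intro hh; exact Or.inl ⟨hh, hh.2⟩
      · rintro (⟨h1, _⟩ | ⟨h1, h2⟩)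
        · exact h1
        · exact absurd h2.2 (by simp)
    · simp only [Formula.subst, if_neg hwx, Formula.free,
        Set.mem_diff, Set.mem_singleton_iff, ih h.2]
      constructor
      · rintro ⟨(⟨h1, h2⟩ | ⟨h1, h2⟩), h3⟩
        · exact Or.inl ⟨⟨h1, h3⟩, h2⟩
        · exact Or.inr ⟨h1, h2, fun hh => hwx hh.symm⟩
      · rintro (⟨⟨h1, h2⟩, h3⟩ | ⟨h1, h2, _⟩)
        · exact ⟨Or.inl ⟨h1, h3⟩, h2⟩
        · exact ⟨Or.inr ⟨h1, h2⟩, h1 ▸ hzw⟩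
  | op K φ ih => exact ih

lemma varMatch_subst {x y z : ℕ} {ρ₂ : List (ℕ × ℕ)} :
    ∀ (ρ₁ : List (ℕ × ℕ)) (u v : ℕ), varMatch (ρ₁ ++ (x, y) :: ρ₂) u v → FreshL z ρ₁ →
      u ≠ z → v ≠ z →
      varMatch (ρ₁ ++ (z, z) :: ρ₂)
        (if u = x ∧ x ∉ ρ₁.map Prod.fst then z else u)
        (if v = y ∧ y ∉ ρ₁.map Prod.snd then z else v) := by
  intro ρ₁
  induction ρ₁ with
  | nil =>
    intro u v h hf hu hv
    simp only [List.nil_append, List.map_nil, List.not_mem_nil, not_false_iff, and_true] at h ⊢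
    rcases h with ⟨rfl, rfl⟩ | ⟨h1, h2, h3⟩
    · simp only [if_pos rfl]
      exact Or.inl ⟨rfl, rfl⟩
    · rw [if_neg h1, if_neg h2]
      exact Or.inr ⟨hu, hv, h3⟩
  | cons p ρ₁ ih =>
    obtain ⟨a, b⟩ := p
    intro u v h hf hu hv
    have hza : z ≠ a := (hf (a, b) (List.mem_cons_self)).1
    have hzb : z ≠ b := (hf (a, b) (List.mem_cons_self)).2
    simp only [List.cons_append, List.map_cons] at h ⊢
    rcases h with ⟨rfl, rfl⟩ | ⟨h1, h2, h3⟩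
    · have hc1 : ¬(u = x ∧ x ∉ u :: ρ₁.map Prod.fst) := by
        rintro ⟨rfl, hh⟩; exact hh (List.mem_cons_self)
      have hc2 : ¬(v = y ∧ y ∉ v :: ρ₁.map Prod.snd) := by
        rintro ⟨rfl, hh⟩; exact hh (List.mem_cons_self)
      rw [if_neg hc1, if_neg hc2]
      exact Or.inl ⟨rfl, rfl⟩
    · have key := ih u v h3 hf.tail hu hv
      have e1 : (if u = x ∧ x ∉ a :: ρ₁.map Prod.fst then z else u) =
          (if u = x ∧ x ∉ ρ₁.map Prod.fst then z else u) := by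
        by_cases hc : u = x ∧ x ∉ ρ₁.map Prod.fst
        · have hxa : ¬ x = a := hc.1 ▸ h1
          have hmem : x ∉ a :: ρ₁.map Prod.fst := by
            simp only [List.mem_cons, not_or]
            exact ⟨hxa, hc.2⟩
          rw [if_pos ⟨hc.1, hmem⟩, if_pos hc]
        · rw [if_neg hc, if_neg (fun hh => hc ⟨hh.1, fun hm => hh.2 (List.mem_cons_of_mem _ hm)⟩)]
      have e2 : (if v = y ∧ y ∉ b :: ρ₁.map Prod.snd then z else v) =
          (if v = y ∧ y ∉ ρ₁.map Prod.snd then z else v) := by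
        by_cases hc : v = y ∧ y ∉ ρ₁.map Prod.snd
        · have hyb : ¬ y = b := hc.1 ▸ h2
          have hmem : y ∉ b :: ρ₁.map Prod.snd := by
            simp only [List.mem_cons, not_or]
            exact ⟨hyb, hc.2⟩
          rw [if_pos ⟨hc.1, hmem⟩, if_pos hc]
        · rw [if_neg hc, if_neg (fun hh => hc ⟨hh.1, fun hm => hh.2 (List.mem_cons_of_mem _ hm)⟩)]
      refine Or.inr ⟨?_, ?_, by rw [e1, e2]; exact key⟩
      · by_cases hc : u = x ∧ x ∉ a :: ρ₁.map Prod.fst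
        · rw [if_pos hc]; exact hza
        · rw [if_neg hc]; exact h1
      · by_cases hc : v = y ∧ y ∉ b :: ρ₁.map Prod.snd
        · rw [if_pos hc]; exact hzb
        · rw [if_neg hc]; exact h2

lemma Term.not_mem_vars_of_avars {z : ℕ} {a : Term} (h : z ∉ a.avars) : z ∉ a.vars :=
  fun hz => h (Term.vars_subset_avars a z hz)

lemma Term.alpha_subst_fresh {x y z : ℕ} {ρ₂ : List (ℕ × ℕ)} :
    ∀ (a b : Term) (ρ₁ : List (ℕ × ℕ)), a.alpha (ρ₁ ++ (x, y) :: ρ₂) b →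
      z ∉ a.avars → z ∉ b.avars → FreshL z ρ₁ →
      (if x ∈ ρ₁.map Prod.fst then a else Term.subst x (.var z) a).alpha (ρ₁ ++ (z, z) :: ρ₂)
        (if y ∈ ρ₁.map Prod.snd then b else Term.subst y (.var z) b) := by
  intro a
  induction a with
  | var u =>
    intro b ρ₁ hab hza hzb hf
    cases b <;> simp only [Term.alpha] at hab
    case var v =>
      have hu : u ≠ z := by
        intro hh; subst hh; exact hza (by simp [Term.avars])
      have hv : v ≠ z := by
        intro hh; subst hh; exact hzb (by simp [Term.avars])
      have key := varMatch_subst ρ₁ u v hab hf hu hv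
      have e1 : (if x ∈ ρ₁.map Prod.fst then Term.var u else Term.subst x (.var z) (Term.var u)) =
          Term.var (if u = x ∧ x ∉ ρ₁.map Prod.fst then z else u) := by
        by_cases hc : x ∈ ρ₁.map Prod.fst
        · rw [if_pos hc, if_neg (fun hh => hh.2 hc)]
        · rw [if_neg hc]
          by_cases hux : u = x
          · subst hux
            simp [Term.subst, hc]
          · simp [Term.subst, hux]
      have e2 : (if y ∈ ρ₁.map Prod.snd then Term.var v else Term.subst y (.var z) (Term.var v)) =
          Term.var (if v = y ∧ y ∉ ρ₁.map Prod.snd then z else v) := by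
        by_cases hc : y ∈ ρ₁.map Prod.snd
        · rw [if_pos hc, if_neg (fun hh => hh.2 hc)]
        · rw [if_neg hc]
          by_cases hvy : v = y
          · subst hvy
            simp [Term.subst, hc]
          · simp [Term.subst, hvy]
      rw [e1, e2]
      exact key
  | zero =>
    intro b ρ₁ hab hza hzb hf
    cases b <;> simp only [Term.alpha] at hab
    case zero =>
      by_cases hcx : x ∈ ρ₁.map Prod.fst <;> by_cases hcy : y ∈ ρ₁.map Prod.snd <;>
        simp only [hcx, hcy, if_true, if_false, Term.subst] <;> trivial
  | succ t ih =>
    intro b ρ₁ hab hza hzb hf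
    cases b <;> simp only [Term.alpha] at hab
    case succ t' =>
      have h1 := ih t' ρ₁ hab hza hzb hf
      by_cases hcx : x ∈ ρ₁.map Prod.fst <;> by_cases hcy : y ∈ ρ₁.map Prod.snd <;>
        simp only [hcx, hcy, if_true, if_false, Term.subst] at h1 ⊢ <;>
        exact h1
  | add t₁ t₂ ih₁ ih₂ =>
    intro b ρ₁ hab hza hzb hf
    cases b <;> simp only [Term.alpha] at hab
    case add u₁ u₂ =>
      simp only [Term.avars, Finset.mem_union, not_or] at hza hzb
      have h1 := ih₁ u₁ ρ₁ hab.1 hza.1 hzb.1 hf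
      have h2 := ih₂ u₂ ρ₁ hab.2 hza.2 hzb.2 hf
      by_cases hcx : x ∈ ρ₁.map Prod.fst <;> by_cases hcy : y ∈ ρ₁.map Prod.snd <;>
        simp only [hcx, hcy, if_true, if_false, Term.subst] at h1 h2 ⊢ <;>
        exact ⟨h1, h2⟩
  | mul t₁ t₂ ih₁ ih₂ =>
    intro b ρ₁ hab hza hzb hf
    cases b <;> simp only [Term.alpha] at hab
    case mul u₁ u₂ =>
      simp only [Term.avars, Finset.mem_union, not_or] at hza hzb
      have h1 := ih₁ u₁ ρ₁ hab.1 hza.1 hzb.1 hf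
      have h2 := ih₂ u₂ ρ₁ hab.2 hza.2 hzb.2 hf
      by_cases hcx : x ∈ ρ₁.map Prod.fst <;> by_cases hcy : y ∈ ρ₁.map Prod.snd <;>
        simp only [hcx, hcy, if_true, if_false, Term.subst] at h1 h2 ⊢ <;>
        exact ⟨h1, h2⟩

end Aux3


section Aux4

open Classical

lemma Formula.alpha_subst_fresh {Op : Type} {x y z : ℕ} {ρ₂ : List (ℕ × ℕ)} :
    ∀ (φ ψ : Formula Op) (ρ₁ : List (ℕ × ℕ)), φ.alpha (ρ₁ ++ (x, y) :: ρ₂) ψ →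
      z ∉ φ.avars → z ∉ ψ.avars → FreshL z ρ₁ →
      (if x ∈ ρ₁.map Prod.fst then φ else φ.subst x (.var z)).alpha (ρ₁ ++ (z, z) :: ρ₂)
        (if y ∈ ρ₁.map Prod.snd then ψ else ψ.subst y (.var z)) := by
  intro φ
  induction φ with
  | eq t₁ t₂ =>
    intro ψ ρ₁ hab hza hzb hf
    cases ψ <;> simp only [Formula.alpha] at hab
    case eq u₁ u₂ =>
      simp only [Formula.avars, Finset.mem_union, not_or] at hza hzb
      have h1 := Term.alpha_subst_fresh t₁ u₁ ρ₁ hab.1 hza.1 hzb.1 hf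
      have h2 := Term.alpha_subst_fresh t₂ u₂ ρ₁ hab.2 hza.2 hzb.2 hf
      by_cases hcx : x ∈ ρ₁.map Prod.fst <;> by_cases hcy : y ∈ ρ₁.map Prod.snd <;>
        simp only [hcx, hcy, if_true, if_false, Formula.subst] at h1 h2 ⊢ <;>
        exact ⟨h1, h2⟩
  | imp φ₁ φ₂ ih₁ ih₂ =>
    intro ψ ρ₁ hab hza hzb hf
    cases ψ <;> simp only [Formula.alpha] at hab
    case imp ψ₁ ψ₂ =>
      simp only [Formula.avars, Finset.mem_union, not_or] at hza hzb
      have h1 := ih₁ ψ₁ ρ₁ hab.1 hza.1 hzb.1 hf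
      have h2 := ih₂ ψ₂ ρ₁ hab.2 hza.2 hzb.2 hf
      by_cases hcx : x ∈ ρ₁.map Prod.fst <;> by_cases hcy : y ∈ ρ₁.map Prod.snd <;>
        simp only [hcx, hcy, if_true, if_false, Formula.subst] at h1 h2 ⊢ <;>
        exact ⟨h1, h2⟩
  | not φ ih =>
    intro ψ ρ₁ hab hza hzb hf
    cases ψ <;> simp only [Formula.alpha] at hab
    case not ψ₀ =>
      have h1 := ih ψ₀ ρ₁ hab hza hzb hf
      by_cases hcx : x ∈ ρ₁.map Prod.fst <;> by_cases hcy : y ∈ ρ₁.map Prod.snd <;>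
        simp only [hcx, hcy, if_true, if_false, Formula.subst] at h1 ⊢ <;>
        exact h1
  | all w φ ih =>
    intro ψ ρ₁ hab hza hzb hf
    cases ψ <;> simp only [Formula.alpha] at hab
    case all w' ψ₀ =>
      simp only [Formula.avars, Finset.mem_insert, not_or] at hza hzb
      have hzw : z ≠ w := hza.1
      have hzw' : z ≠ w' := hzb.1
      have hf' : FreshL z ((w, w') :: ρ₁) := by
        intro p hp
        rcases List.mem_cons.1 hp with rfl | hp
        · exact ⟨hzw, hzw'⟩
        · exact hf p hp
      have key := ih ψ₀ ((w, w') :: ρ₁) hab hza.2 hzb.2 hf'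
      have e1 : (if x ∈ ρ₁.map Prod.fst then Formula.all w φ
            else (Formula.all w φ).subst x (.var z)) =
          Formula.all w (if x ∈ ((w, w') :: ρ₁).map Prod.fst then φ else φ.subst x (.var z)) := by
        simp only [List.map_cons, List.mem_cons]
        by_cases hcx : x ∈ ρ₁.map Prod.fst
        · rw [if_pos hcx, if_pos (Or.inr hcx)]
        · rw [if_neg hcx]
          by_cases hwx : w = x
          · simp only [Formula.subst, if_pos hwx, if_pos (Or.inl hwx.symm)]
          · have hcond : ¬ (x = w ∨ x ∈ List.map Prod.fst ρ₁) := by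
              rintro (h1 | h1)
              · exact hwx h1.symm
              · exact hcx h1
            simp only [Formula.subst, if_neg hwx, if_neg hcond]
      have e2 : (if y ∈ ρ₁.map Prod.snd then Formula.all w' ψ₀
            else (Formula.all w' ψ₀).subst y (.var z)) =
          Formula.all w' (if y ∈ ((w, w') :: ρ₁).map Prod.snd then ψ₀ else ψ₀.subst y (.var z)) := by
        simp only [List.map_cons, List.mem_cons]
        by_cases hcy : y ∈ ρ₁.map Prod.snd
        · rw [if_pos hcy, if_pos (Or.inr hcy)]
        · rw [if_neg hcy]
          by_cases hwy : w' = y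
          · simp only [Formula.subst, if_pos hwy, if_pos (Or.inl hwy.symm)]
          · have hcond : ¬ (y = w' ∨ y ∈ List.map Prod.snd ρ₁) := by
              rintro (h1 | h1)
              · exact hwy h1.symm
              · exact hcy h1
            simp only [Formula.subst, if_neg hwy, if_neg hcond]
      rw [e1, e2]
      exact key
  | op K φ ih =>
    intro ψ ρ₁ hab hza hzb hf
    cases ψ <;> simp only [Formula.alpha] at hab
    case op K' ψ₀ =>
      have h1 := ih ψ₀ ρ₁ hab.2 hza hzb hf
      by_cases hcx : x ∈ ρ₁.map Prod.fst <;> by_cases hcy : y ∈ ρ₁.map Prod.snd <;>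
        simp only [hcx, hcy, if_true, if_false, Formula.subst] at h1 ⊢ <;>
        exact ⟨hab.1, h1⟩

/-- The variables occurring in a list of pairs. -/
def pairVars : List (ℕ × ℕ) → Finset ℕ
  | [] => ∅
  | (a, b) :: ρ => insert a (insert b (pairVars ρ))

lemma freshL_of_not_mem {z : ℕ} : ∀ {ρ : List (ℕ × ℕ)}, z ∉ pairVars ρ → FreshL z ρ
  | [], _ => fun p hp => absurd hp List.not_mem_nil
  | (a, b) :: ρ, h => by
    simp only [pairVars, Finset.mem_insert, not_or] at h
    intro p hp
    rcases List.mem_cons.1 hp with rfl | hp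
    · exact ⟨h.1, h.2.1⟩
    · exact freshL_of_not_mem h.2.2 p hp

lemma opAlpha {Op : Type} {N : PreStruc Op} (hN : IsStruc N) (K : Op) :
    ∀ (n : ℕ) (ρ : List (ℕ × ℕ)) (φ ψ : Formula Op) (s t : ℕ → N.U), ρ.length = n →
      φ.alpha ρ ψ →
      (∀ u v, varMatch ρ u v → u ∈ φ.free → v ∈ ψ.free → s u = t v) →
      (N.opSat K φ s ↔ N.opSat K ψ t) := by
  intro n
  induction n with
  | zero =>
    intro ρ φ ψ s t hlen hal hc
    have hρ : ρ = [] := List.length_eq_zero_iff.1 hlen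
    subst hρ
    have hfree : φ.free = ψ.free := Formula.alphaVariant_free_eq hal
    have h1 : ∀ u ∈ φ.free, s u = t u := fun u hu => hc u u rfl hu (hfree ▸ hu)
    exact Iff.trans (hN.1 K φ s t h1) (hN.2.1 K φ ψ t hal)
  | succ n ih =>
    intro ρ φ ψ s t hlen hal hc
    obtain ⟨p, ρ', rfl⟩ : ∃ p ρ', ρ = p :: ρ' := by
      cases ρ with
      | nil => simp at hlen
      | cons p ρ' => exact ⟨p, ρ', rfl⟩
    obtain ⟨x, y⟩ := p
    have hlen' : ρ'.length = n := by simpa using hlen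
    obtain ⟨z, hz⟩ := exists_fresh (φ.avars ∪ ψ.avars ∪ pairVars ρ' ∪ {x, y})
    simp only [Finset.mem_union, Finset.mem_insert, Finset.mem_singleton, not_or] at hz
    obtain ⟨⟨⟨hzφ, hzψ⟩, hzρ⟩, hzx, hzy⟩ := hz
    have hfρ' : FreshL z ρ' := freshL_of_not_mem hzρ
    have hzfφ : z ∉ φ.free := fun h => hzφ (Formula.free_subset_avars φ z h)
    have hzfψ : z ∉ ψ.free := fun h => hzψ (Formula.free_subset_avars ψ z h)
    have key := Formula.alpha_subst_fresh φ ψ [] hal hzφ hzψ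
      (fun p hp => absurd hp List.not_mem_nil)
    simp only [List.map_nil] at key
    rw [if_neg (List.not_mem_nil : x ∉ []), if_neg (List.not_mem_nil : y ∉ []), List.nil_append] at key
    have hal2 : (φ.subst x (.var z)).alpha ρ' (ψ.subst y (.var z)) :=
      Formula.alpha_congr _ _ _ _ (fun u v => varMatch_cons_same hfρ') key
    have hc1 : ∀ u v, varMatch ρ' u v → u ∈ (φ.subst x (.var z)).free →
        v ∈ (ψ.subst y (.var z)).free →
        Function.update s z (s x) u = Function.update t z (t y) v := by
      intro u v hm hu hv
      rw [Formula.mem_free_subst hzφ] at hu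
      rw [Formula.mem_free_subst hzψ] at hv
      by_cases huz : u = z
      · have hm' := hm
        rw [huz] at hm'
        have hvz : v = z := varMatch_right_of_left hfρ' hm'
        have hxf : x ∈ φ.free := by
          rcases hu with ⟨h1, _⟩ | ⟨_, h2⟩
          · rw [huz] at h1; exact absurd h1 hzfφ
          · exact h2
        have hyf : y ∈ ψ.free := by
          rcases hv with ⟨h1, _⟩ | ⟨_, h2⟩
          · rw [hvz] at h1; exact absurd h1 hzfψ
          · exact h2
        rw [huz, hvz, Function.update_self, Function.update_self]
        exact hc x y (Or.inl ⟨rfl, rfl⟩) hxf hyf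
      · have hvz : v ≠ z := by
          intro hh
          subst hh
          exact huz (varMatch_left_of_right hfρ' hm)
        rcases hu with ⟨hu1, hu2⟩ | ⟨hu1, _⟩
        swap
        · exact absurd hu1 huz
        rcases hv with ⟨hv1, hv2⟩ | ⟨hv1, _⟩
        swap
        · exact absurd hv1 hvz
        rw [Function.update_of_ne huz, Function.update_of_ne hvz]
        exact hc u v (Or.inr ⟨hu2, hv2, hm⟩) hu1 hv1
    have hmain := ih ρ' (φ.subst x (.var z)) (ψ.subst y (.var z))
      (Function.update s z (s x)) (Function.update t z (t y)) hlen' hal2 hc1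
    have hsubφ : φ.Substitutable x (Term.var z) := Formula.substitutable_fresh hzφ
    have hsubψ : ψ.Substitutable y (Term.var z) := Formula.substitutable_fresh hzψ
    have h2 := hN.2.2 K φ x z (Function.update s z (s x)) hsubφ
    have h5 := hN.2.2 K ψ y z (Function.update t z (t y)) hsubψ
    have h3 : ∀ u ∈ φ.free,
        (Function.update (Function.update s z (s x)) x
          (Function.update s z (s x) z)) u = s u := by
      intro u hu
      by_cases hux : u = x
      · subst hux
        rw [Function.update_self, Function.update_self]
      · have huz : u ≠ z := by intro hh; rw [hh] at hu; exact hzfφ hu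
        rw [Function.update_of_ne hux, Function.update_of_ne huz]
    have h6 : ∀ u ∈ ψ.free,
        (Function.update (Function.update t z (t y)) y
          (Function.update t z (t y) z)) u = t u := by
      intro u hu
      by_cases huy : u = y
      · subst huy
        rw [Function.update_self, Function.update_self]
      · have huz : u ≠ z := by intro hh; rw [hh] at hu; exact hzfψ hu
        rw [Function.update_of_ne huy, Function.update_of_ne huz]
    have h4 := hN.1 K φ _ s h3
    have h7 := hN.1 K ψ _ t h6
    exact ((h4.symm.trans h2.symm).trans hmain).trans (h5.trans h7)

lemma Term.eval_alpha {Op : Type} {N : PreStruc Op} :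
    ∀ (a b : Term) (ρ : List (ℕ × ℕ)) (σ τ : ℕ → N.U), a.alpha ρ b →
      (∀ u v, varMatch ρ u v → u ∈ a.vars → v ∈ b.vars → σ u = τ v) →
      a.eval N σ = b.eval N τ := by
  intro a
  induction a with
  | var x =>
    intro b ρ σ τ hab hc
    cases b <;> simp only [Term.alpha] at hab
    case var y => exact hc x y hab (by simp [Term.vars]) (by simp [Term.vars])
  | zero =>
    intro b ρ σ τ hab hc
    cases b <;> simp only [Term.alpha] at hab
    rfl
  | succ a ih =>
    intro b ρ σ τ hab hc
    cases b <;> simp only [Term.alpha] at hab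
    case succ b' =>
      show N.succ (a.eval N σ) = N.succ (b'.eval N τ)
      rw [ih b' ρ σ τ hab hc]
  | add a₁ a₂ ih₁ ih₂ =>
    intro b ρ σ τ hab hc
    cases b <;> simp only [Term.alpha] at hab
    case add b₁ b₂ =>
      show N.add (a₁.eval N σ) (a₂.eval N σ) = N.add (b₁.eval N τ) (b₂.eval N τ)
      rw [ih₁ b₁ ρ σ τ hab.1
          (fun u v hm hu hv => hc u v hm (Set.mem_union_left _ hu) (Set.mem_union_left _ hv)),
        ih₂ b₂ ρ σ τ hab.2
          (fun u v hm hu hv => hc u v hm (Set.mem_union_right _ hu) (Set.mem_union_right _ hv))]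
  | mul a₁ a₂ ih₁ ih₂ =>
    intro b ρ σ τ hab hc
    cases b <;> simp only [Term.alpha] at hab
    case mul b₁ b₂ =>
      show N.mul (a₁.eval N σ) (a₂.eval N σ) = N.mul (b₁.eval N τ) (b₂.eval N τ)
      rw [ih₁ b₁ ρ σ τ hab.1
          (fun u v hm hu hv => hc u v hm (Set.mem_union_left _ hu) (Set.mem_union_left _ hv)),
        ih₂ b₂ ρ σ τ hab.2
          (fun u v hm hu hv => hc u v hm (Set.mem_union_right _ hu) (Set.mem_union_right _ hv))]

lemma sat_alpha {Op : Type} {N : PreStruc Op} (hN : IsStruc N) :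
    ∀ (φ ψ : Formula Op) (ρ : List (ℕ × ℕ)) (σ τ : ℕ → N.U), φ.alpha ρ ψ →
      (∀ u v, varMatch ρ u v → u ∈ φ.free → v ∈ ψ.free → σ u = τ v) →
      (Sat N φ σ ↔ Sat N ψ τ) := by
  intro φ
  induction φ with
  | eq t₁ t₂ =>
    intro ψ ρ σ τ hab hc
    cases ψ <;> simp only [Formula.alpha] at hab
    case eq u₁ u₂ =>
      show t₁.eval N σ = t₂.eval N σ ↔ u₁.eval N τ = u₂.eval N τ
      rw [Term.eval_alpha t₁ u₁ ρ σ τ hab.1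
          (fun u v hm hu hv => hc u v hm (Set.mem_union_left _ hu) (Set.mem_union_left _ hv)),
        Term.eval_alpha t₂ u₂ ρ σ τ hab.2
          (fun u v hm hu hv => hc u v hm (Set.mem_union_right _ hu) (Set.mem_union_right _ hv))]
  | imp φ₁ φ₂ ih₁ ih₂ =>
    intro ψ ρ σ τ hab hc
    cases ψ <;> simp only [Formula.alpha] at hab
    case imp ψ₁ ψ₂ =>
      show (Sat N φ₁ σ → Sat N φ₂ σ) ↔ (Sat N ψ₁ τ → Sat N ψ₂ τ)
      exact imp_congr
        (ih₁ ψ₁ ρ σ τ hab.1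
          (fun u v hm hu hv => hc u v hm (Set.mem_union_left _ hu) (Set.mem_union_left _ hv)))
        (ih₂ ψ₂ ρ σ τ hab.2
          (fun u v hm hu hv => hc u v hm (Set.mem_union_right _ hu) (Set.mem_union_right _ hv)))
  | not φ ih =>
    intro ψ ρ σ τ hab hc
    cases ψ <;> simp only [Formula.alpha] at hab
    case not ψ₀ =>
      show ¬ Sat N φ σ ↔ ¬ Sat N ψ₀ τ
      exact not_congr (ih ψ₀ ρ σ τ hab hc)
  | all x φ ih =>
    intro ψ ρ σ τ hab hc
    cases ψ <;> simp only [Formula.alpha] at hab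
    case all y ψ₀ =>
      show (∀ a : N.U, Sat N φ (Function.update σ x a)) ↔
        (∀ a : N.U, Sat N ψ₀ (Function.update τ y a))
      refine forall_congr' fun a => ih ψ₀ ((x, y) :: ρ) _ _ hab ?_
      intro u v hm hu hv
      rcases hm with ⟨rfl, rfl⟩ | ⟨h1, h2, h3⟩
      · rw [Function.update_self, Function.update_self]
      · rw [Function.update_of_ne h1, Function.update_of_ne h2]
        exact hc u v h3 ⟨hu, h1⟩ ⟨hv, h2⟩
  | op K φ ih =>
    intro ψ ρ σ τ hab hc
    cases ψ <;> simp only [Formula.alpha] at hab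
    case op K' ψ₀ =>
      obtain ⟨rfl, hal⟩ := hab
      show N.opSat K φ σ ↔ N.opSat K ψ₀ τ
      exact opAlpha hN K ρ.length ρ φ ψ₀ σ τ rfl hal hc

end Aux4


section Aux5

open Classical

lemma Term.numSub_congr {s t : ℕ → ℕ} : ∀ {a : Term} {B : List ℕ},
    (∀ x ∈ a.vars, x ∉ B → s x = t x) → a.numSub s B = a.numSub t B := by
  intro a
  induction a with
  | var x =>
    intro B h
    by_cases hx : x ∈ B
    · simp [Term.numSub, hx]
    · simp [Term.numSub, hx, h x (by simp [Term.vars]) hx]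
  | zero => intro B h; rfl
  | succ a ih =>
    intro B h
    simp only [Term.numSub]
    rw [ih h]
  | add a₁ a₂ ih₁ ih₂ =>
    intro B h
    simp only [Term.numSub]
    rw [ih₁ (fun x hx hB => h x (Set.mem_union_left _ hx) hB),
      ih₂ (fun x hx hB => h x (Set.mem_union_right _ hx) hB)]
  | mul a₁ a₂ ih₁ ih₂ =>
    intro B h
    simp only [Term.numSub]
    rw [ih₁ (fun x hx hB => h x (Set.mem_union_left _ hx) hB),
      ih₂ (fun x hx hB => h x (Set.mem_union_right _ hx) hB)]

lemma Formula.numSub_congr {Op : Type} {s t : ℕ → ℕ} : ∀ {φ : Formula Op} {B : List ℕ},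
    (∀ x ∈ φ.free, x ∉ B → s x = t x) → φ.numSub s B = φ.numSub t B := by
  intro φ
  induction φ with
  | eq t₁ t₂ =>
    intro B h
    simp only [Formula.numSub]
    rw [Term.numSub_congr (fun x hx hB => h x (Set.mem_union_left _ hx) hB),
      Term.numSub_congr (fun x hx hB => h x (Set.mem_union_right _ hx) hB)]
  | imp φ₁ φ₂ ih₁ ih₂ =>
    intro B h
    simp only [Formula.numSub]
    rw [ih₁ (fun x hx hB => h x (Set.mem_union_left _ hx) hB),
      ih₂ (fun x hx hB => h x (Set.mem_union_right _ hx) hB)]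
  | not φ ih =>
    intro B h
    simp only [Formula.numSub]
    rw [ih h]
  | all x φ ih =>
    intro B h
    simp only [Formula.numSub]
    rw [ih (fun v hv hB => ?_)]
    have hvx : v ≠ x := fun hh => hB (hh ▸ (List.mem_cons_self : x ∈ x :: B))
    exact h v ⟨hv, hvx⟩ (fun hh => hB (List.mem_cons_of_mem _ hh))
  | op K φ ih =>
    intro B h
    simp only [Formula.numSub]
    rw [ih h]

lemma Term.numSub_numSub (s₀ s : ℕ → ℕ) (B : List ℕ) :
    ∀ (a : Term) (C : List ℕ),
      (a.numSub s₀ (C ++ B)).numSub s C = a.numSub (fun x => if x ∈ B then s x else s₀ x) C := by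
  intro a
  induction a with
  | var x =>
    intro C
    by_cases hC : x ∈ C
    · simp [Term.numSub, hC, List.mem_append, Or.inl hC]
    · by_cases hB : x ∈ B
      · simp [Term.numSub, hC, hB, List.mem_append]
      · simp [Term.numSub, hC, hB, List.mem_append, numSub_numeral]
  | zero => intro C; rfl
  | succ a ih =>
    intro C
    simp only [Term.numSub]
    rw [ih]
  | add a₁ a₂ ih₁ ih₂ =>
    intro C
    simp only [Term.numSub]
    rw [ih₁, ih₂]
  | mul a₁ a₂ ih₁ ih₂ =>
    intro C
    simp only [Term.numSub]
    rw [ih₁, ih₂]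

lemma Formula.numSub_numSub {Op : Type} (s₀ s : ℕ → ℕ) (B : List ℕ) :
    ∀ (φ : Formula Op) (C : List ℕ),
      (φ.numSub s₀ (C ++ B)).numSub s C = φ.numSub (fun x => if x ∈ B then s x else s₀ x) C := by
  intro φ
  induction φ with
  | eq t₁ t₂ =>
    intro C
    simp only [Formula.numSub]
    rw [Term.numSub_numSub, Term.numSub_numSub]
  | imp φ₁ φ₂ ih₁ ih₂ =>
    intro C
    simp only [Formula.numSub]
    rw [ih₁, ih₂]
  | not φ ih =>
    intro C
    simp only [Formula.numSub]
    rw [ih]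
  | all x φ ih =>
    intro C
    simp only [Formula.numSub]
    rw [show x :: (C ++ B) = (x :: C) ++ B from rfl, ih]
  | op K φ ih =>
    intro C
    simp only [Formula.numSub]
    rw [ih]

lemma Term.numSub_subst {x y : ℕ} (s : ℕ → ℕ) :
    ∀ (a : Term) (B : List ℕ), x ∉ B → y ∉ B →
      (Term.subst x (.var y) a).numSub s B = a.numSub (Function.update s x (s y)) B := by
  intro a
  induction a with
  | var v =>
    intro B hx hy
    by_cases hvx : v = x
    · subst hvx
      simp only [Term.subst, if_pos rfl, if_true, Term.numSub, if_neg hx, if_neg hy,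
        Function.update_self]
    · simp only [Term.subst, if_neg hvx, Term.numSub, Function.update_of_ne hvx]
  | zero => intro B hx hy; rfl
  | succ a ih =>
    intro B hx hy
    simp only [Term.subst, Term.numSub]
    rw [ih B hx hy]
  | add a₁ a₂ ih₁ ih₂ =>
    intro B hx hy
    simp only [Term.subst, Term.numSub]
    rw [ih₁ B hx hy, ih₂ B hx hy]
  | mul a₁ a₂ ih₁ ih₂ =>
    intro B hx hy
    simp only [Term.subst, Term.numSub]
    rw [ih₁ B hx hy, ih₂ B hx hy]

lemma Formula.numSub_subst {Op : Type} {x y : ℕ} (s : ℕ → ℕ) :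
    ∀ (φ : Formula Op) (B : List ℕ), φ.Substitutable x (.var y) → x ∉ B → y ∉ B →
      (φ.subst x (.var y)).numSub s B = φ.numSub (Function.update s x (s y)) B := by
  intro φ
  induction φ with
  | eq t₁ t₂ =>
    intro B hsub hx hy
    simp only [Formula.subst, Formula.numSub]
    rw [Term.numSub_subst s t₁ B hx hy, Term.numSub_subst s t₂ B hx hy]
  | imp φ₁ φ₂ ih₁ ih₂ =>
    intro B hsub hx hy
    simp only [Formula.subst, Formula.numSub]
    rw [ih₁ B hsub.1 hx hy, ih₂ B hsub.2 hx hy]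
  | not φ ih =>
    intro B hsub hx hy
    simp only [Formula.subst, Formula.numSub]
    rw [ih B hsub hx hy]
  | all z φ ih =>
    intro B hsub hx hy
    by_cases hzx : z = x
    · subst hzx
      simp only [Formula.subst, if_pos rfl, if_true, Formula.numSub]
      rw [Formula.numSub_congr (s := s) (t := Function.update s z (s y)) ?_]
      intro v hv hB
      have hvz : v ≠ z := fun hh => hB (hh ▸ (List.mem_cons_self : z ∈ z :: B))
      rw [Function.update_of_ne hvz]
    · simp only [Formula.subst, if_neg hzx, Formula.numSub]
      rcases hsub with h | h | ⟨h1, h2⟩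
      · exact absurd h.symm hzx
      · rw [Formula.subst_of_not_free h]
        rw [Formula.numSub_congr (s := Function.update s x (s y)) (t := s) ?_]
        intro v hv hB
        have hvx : v ≠ x := fun hh => h (hh ▸ hv)
        rw [Function.update_of_ne hvx]
      · have hzy : z ≠ y := by
          simp only [Term.vars, Set.mem_singleton_iff] at h1
          exact h1
        rw [ih (z :: B) h2 ?_ ?_]
        · simp only [List.mem_cons, not_or]
          exact ⟨fun hh => hzx hh.symm, hx⟩
        · simp only [List.mem_cons, not_or]
          exact ⟨fun hh => hzy hh.symm, hy⟩
  | op K φ ih =>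
    intro B hsub hx hy
    simp only [Formula.subst, Formula.numSub]
    rw [ih B hsub hx hy]

lemma Formula.on_numSub (s : ℕ → ℕ) : ∀ (φ : LOO) (B : List ℕ), (φ.numSub s B).On = φ.On := by
  intro φ
  induction φ with
  | eq t₁ t₂ => intro B; rfl
  | imp φ₁ φ₂ ih₁ ih₂ => intro B; simp [Formula.numSub, Formula.On, ih₁, ih₂]
  | not φ ih => intro B; simp [Formula.numSub, Formula.On, ih]
  | all x φ ih => intro B; simp [Formula.numSub, Formula.On, ih]
  | op K φ ih => intro B; simp [Formula.numSub, Formula.On, ih]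

lemma Formula.on_subst (x : ℕ) (u : Term) : ∀ φ : LOO, (φ.subst x u).On = φ.On := by
  intro φ
  induction φ with
  | eq t₁ t₂ => rfl
  | imp φ₁ φ₂ ih₁ ih₂ => simp [Formula.subst, Formula.On, ih₁, ih₂]
  | not φ ih => simp [Formula.subst, Formula.On, ih]
  | all y φ ih =>
    by_cases hyx : y = x
    · simp [Formula.subst, hyx, Formula.On]
    · simp [Formula.subst, hyx, Formula.On, ih]
  | op K φ ih => simp [Formula.subst, Formula.On, ih]

lemma Formula.on_finite : ∀ φ : LOO, φ.On.Finite := by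
  intro φ
  induction φ with
  | eq t₁ t₂ => exact Set.finite_empty
  | imp φ₁ φ₂ ih₁ ih₂ => exact ih₁.union ih₂
  | not φ ih => exact ih
  | all x φ ih => exact ih
  | op K φ ih => exact ih.insert K

lemma free_stratify (X : Set Ord2) : ∀ φ : LEA, (stratify X φ).free = φ.free := by
  intro φ
  induction φ with
  | eq t₁ t₂ => rfl
  | imp φ₁ φ₂ ih₁ ih₂ => simp [stratify, Formula.free, ih₁, ih₂]
  | not φ ih => simp [stratify, Formula.free, ih]
  | all x φ ih => simp [stratify, Formula.free, ih]
  | op K φ ih => simp [stratify, Formula.free, ih]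

lemma stratify_numSub (X : Set Ord2) (s : ℕ → ℕ) :
    ∀ (φ : LEA) (B : List ℕ), stratify X (φ.numSub s B) = (stratify X φ).numSub s B := by
  intro φ
  induction φ with
  | eq t₁ t₂ => intro B; rfl
  | imp φ₁ φ₂ ih₁ ih₂ => intro B; simp [Formula.numSub, stratify, ih₁, ih₂]
  | not φ ih => intro B; simp [Formula.numSub, stratify, ih]
  | all x φ ih => intro B; simp [Formula.numSub, stratify, ih]
  | op K φ ih =>
    intro B
    simp only [Formula.numSub, stratify, ih]
    rw [Formula.on_numSub]

lemma stratify_subst (X : Set Ord2) (x : ℕ) (u : Term) :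
    ∀ φ : LEA, stratify X (φ.subst x u) = (stratify X φ).subst x u := by
  intro φ
  induction φ with
  | eq t₁ t₂ => rfl
  | imp φ₁ φ₂ ih₁ ih₂ => simp [Formula.subst, stratify, ih₁, ih₂]
  | not φ ih => simp [Formula.subst, stratify, ih]
  | all y φ ih =>
    by_cases hyx : y = x
    · simp [Formula.subst, hyx, stratify]
    · simp [Formula.subst, hyx, stratify, ih]
  | op K φ ih =>
    simp only [Formula.subst, stratify, ih]
    rw [Formula.on_subst]

lemma stratify_alls (X : Set Ord2) (φ : LEA) :
    ∀ l : List ℕ, stratify X (Formula.alls l φ) = Formula.alls l (stratify X φ) := by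
  intro l
  induction l with
  | nil => rfl
  | cons x l ih => simp [Formula.alls, stratify, ih]

lemma substitutable_stratify (X : Set Ord2) {x : ℕ} {u : Term} :
    ∀ φ : LEA, φ.Substitutable x u → (stratify X φ).Substitutable x u := by
  intro φ
  induction φ with
  | eq t₁ t₂ => intro h; trivial
  | imp φ₁ φ₂ ih₁ ih₂ => intro h; exact ⟨ih₁ h.1, ih₂ h.2⟩
  | not φ ih => exact ih
  | all y φ ih =>
    intro h
    show x = y ∨ x ∉ (stratify X φ).free ∨ (y ∉ u.vars ∧ (stratify X φ).Substitutable x u)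
    rw [free_stratify]
    rcases h with h | h | ⟨h1, h2⟩
    · exact Or.inl h
    · exact Or.inr (Or.inl h)
    · exact Or.inr (Or.inr ⟨h1, ih h2⟩)
  | op K φ ih => exact ih

lemma stratify_alpha (X : Set Ord2) : ∀ (φ ψ : LEA) (ρ : List (ℕ × ℕ)), φ.alpha ρ ψ →
    (stratify X φ).alpha ρ (stratify X ψ) ∧ (stratify X φ).On = (stratify X ψ).On := by
  intro φ
  induction φ with
  | eq t₁ t₂ =>
    intro ψ ρ hab
    cases ψ <;> simp only [Formula.alpha] at hab
    case eq u₁ u₂ => exact ⟨hab, rfl⟩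
  | imp φ₁ φ₂ ih₁ ih₂ =>
    intro ψ ρ hab
    cases ψ <;> simp only [Formula.alpha] at hab
    case imp ψ₁ ψ₂ =>
      obtain ⟨h1, h2⟩ := ih₁ ψ₁ ρ hab.1
      obtain ⟨h3, h4⟩ := ih₂ ψ₂ ρ hab.2
      refine ⟨⟨h1, h3⟩, ?_⟩
      show (stratify X φ₁).On ∪ (stratify X φ₂).On = (stratify X ψ₁).On ∪ (stratify X ψ₂).On
      rw [h2, h4]
  | not φ ih =>
    intro ψ ρ hab
    cases ψ <;> simp only [Formula.alpha] at hab
    case not ψ₀ => exact ih ψ₀ ρ hab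
  | all x φ ih =>
    intro ψ ρ hab
    cases ψ <;> simp only [Formula.alpha] at hab
    case all y ψ₀ => exact ih ψ₀ ((x, y) :: ρ) hab
  | op K φ ih =>
    intro ψ ρ hab
    cases ψ <;> simp only [Formula.alpha] at hab
    case op K' ψ₀ =>
      obtain ⟨h1, h2⟩ := ih ψ₀ ρ hab.2
      refine ⟨⟨by rw [h2], h1⟩, ?_⟩
      show insert (leastIn (X \ (stratify X φ).On)) (stratify X φ).On =
        insert (leastIn (X \ (stratify X ψ₀).On)) (stratify X ψ₀).On
      rw [h2]

lemma varMatch_cases : ∀ (ρ : List (ℕ × ℕ)) (u v : ℕ), varMatch ρ u v →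
    (u ∈ ρ.map Prod.fst ∧ v ∈ ρ.map Prod.snd) ∨
      (u = v ∧ u ∉ ρ.map Prod.fst ∧ v ∉ ρ.map Prod.snd) := by
  intro ρ
  induction ρ with
  | nil =>
    intro u v h
    exact Or.inr ⟨h, List.not_mem_nil, List.not_mem_nil⟩
  | cons p ρ ih =>
    obtain ⟨a, b⟩ := p
    intro u v h
    rcases h with ⟨rfl, rfl⟩ | ⟨h1, h2, h3⟩
    · exact Or.inl ⟨by simp, by simp⟩
    · rcases ih u v h3 with ⟨hm1, hm2⟩ | ⟨he, hn1, hn2⟩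
      · exact Or.inl ⟨by simp [hm1], by simp [hm2]⟩
      · refine Or.inr ⟨he, ?_, ?_⟩
        · simp only [List.map_cons, List.mem_cons, not_or]
          exact ⟨h1, hn1⟩
        · simp only [List.map_cons, List.mem_cons, not_or]
          exact ⟨h2, hn2⟩

lemma Term.numSub_alpha (s : ℕ → ℕ) : ∀ (a b : Term) (ρ : List (ℕ × ℕ)), a.alpha ρ b →
    (a.numSub s (ρ.map Prod.fst)).alpha ρ (b.numSub s (ρ.map Prod.snd)) := by
  intro a
  induction a with
  | var u =>
    intro b ρ hab
    cases b <;> simp only [Term.alpha] at hab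
    case var v =>
      rcases varMatch_cases ρ u v hab with ⟨h1, h2⟩ | ⟨rfl, h1, h2⟩
      · simp only [Term.numSub, if_pos h1, if_pos h2]
        exact hab
      · simp only [Term.numSub, if_neg h1, if_neg h2]
        exact alpha_numeral ρ (s u)
  | zero =>
    intro b ρ hab
    cases b <;> simp only [Term.alpha] at hab
    trivial
  | succ a ih =>
    intro b ρ hab
    cases b <;> simp only [Term.alpha] at hab
    case succ b' => exact ih b' ρ hab
  | add a₁ a₂ ih₁ ih₂ =>
    intro b ρ hab
    cases b <;> simp only [Term.alpha] at hab
    case add b₁ b₂ => exact ⟨ih₁ b₁ ρ hab.1, ih₂ b₂ ρ hab.2⟩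
  | mul a₁ a₂ ih₁ ih₂ =>
    intro b ρ hab
    cases b <;> simp only [Term.alpha] at hab
    case mul b₁ b₂ => exact ⟨ih₁ b₁ ρ hab.1, ih₂ b₂ ρ hab.2⟩

lemma Formula.numSub_alpha {Op : Type} (s : ℕ → ℕ) :
    ∀ (φ ψ : Formula Op) (ρ : List (ℕ × ℕ)), φ.alpha ρ ψ →
      (φ.numSub s (ρ.map Prod.fst)).alpha ρ (ψ.numSub s (ρ.map Prod.snd)) := by
  intro φ
  induction φ with
  | eq t₁ t₂ =>
    intro ψ ρ hab
    cases ψ <;> simp only [Formula.alpha] at hab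
    case eq u₁ u₂ =>
      exact ⟨Term.numSub_alpha s t₁ u₁ ρ hab.1, Term.numSub_alpha s t₂ u₂ ρ hab.2⟩
  | imp φ₁ φ₂ ih₁ ih₂ =>
    intro ψ ρ hab
    cases ψ <;> simp only [Formula.alpha] at hab
    case imp ψ₁ ψ₂ => exact ⟨ih₁ ψ₁ ρ hab.1, ih₂ ψ₂ ρ hab.2⟩
  | not φ ih =>
    intro ψ ρ hab
    cases ψ <;> simp only [Formula.alpha] at hab
    case not ψ₀ => exact ih ψ₀ ρ hab
  | all x φ ih =>
    intro ψ ρ hab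
    cases ψ <;> simp only [Formula.alpha] at hab
    case all y ψ₀ =>
      show (φ.numSub s (x :: ρ.map Prod.fst)).alpha ((x, y) :: ρ)
        (ψ₀.numSub s (y :: ρ.map Prod.snd))
      have := ih ψ₀ ((x, y) :: ρ) hab
      simpa using this
  | op K φ ih =>
    intro ψ ρ hab
    cases ψ <;> simp only [Formula.alpha] at hab
    case op K' ψ₀ => exact ⟨hab.1, ih ψ₀ ρ hab.2⟩

lemma on_stratify_lt (X : Set Ord2) : ∀ (φ : LEA) (S : Set Ord2),
    (stratify X φ).On ⊆ S → (X \ S).Nonempty →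
    ∀ β ∈ (stratify X φ).On, β < leastIn (X \ S) := by
  intro φ
  induction φ with
  | eq t₁ t₂ => intro S hsub hne β hβ; simp [stratify, Formula.On] at hβ
  | imp φ₁ φ₂ ih₁ ih₂ =>
    intro S hsub hne β hβ
    rcases hβ with hβ | hβ
    · exact ih₁ S (fun γ hγ => hsub (Set.mem_union_left _ hγ)) hne β hβ
    · exact ih₂ S (fun γ hγ => hsub (Set.mem_union_right _ hγ)) hne β hβ
  | not φ ih => exact ih
  | all x φ ih => exact ih
  | op K φ ih =>
    intro S hsub hne β hβ
    rcases hβ with rfl | hβ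
    · -- β = leastIn (X \ (stratify X φ).On)
      have hγ : leastIn (X \ S) ∈ X \ S := leastIn_mem hne
      have hγ' : leastIn (X \ S) ∈ X \ (stratify X φ).On :=
        ⟨hγ.1, fun hh => hγ.2 (hsub (Set.mem_insert_of_mem _ hh))⟩
      have hle : leastIn (X \ (stratify X φ).On) ≤ leastIn (X \ S) := leastIn_le hγ'
      have hne' : leastIn (X \ (stratify X φ).On) ≠ leastIn (X \ S) := by
        intro hh
        exact hγ.2 (hsub (hh ▸ Set.mem_insert _ _))
      exact lt_of_le_of_ne hle hne'
    · exact ih S (fun γ hγ => hsub (Set.mem_insert_of_mem _ hγ)) hne β hβ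

end Aux5


section Aux6

open Classical

lemma eval_MStruc_numeral (T' : Set LOO) (s : ℕ → (MStruc T').U) :
    ∀ n : ℕ, Term.eval (MStruc T') s (numeral n) = n := by
  intro n
  induction n with
  | zero => rfl
  | succ n ih =>
    show (MStruc T').succ (Term.eval (MStruc T') s (numeral n)) = n + 1
    rw [ih]
    rfl

lemma eval_MStruc_numSub (T' : Set LOO) (s₀ : ℕ → ℕ) (s : ℕ → (MStruc T').U) :
    ∀ (a : Term) (B : List ℕ),
      Term.eval (MStruc T') s (a.numSub s₀ B) =
        Term.eval (MStruc T') (fun x => if x ∈ B then s x else s₀ x) a := by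
  intro a
  induction a with
  | var x =>
    intro B
    by_cases hx : x ∈ B
    · show Term.eval (MStruc T') s (Term.numSub s₀ B (.var x)) = _
      simp only [Term.numSub, if_pos hx]
      show s x = if x ∈ B then s x else s₀ x
      exact (if_pos hx).symm
    · show Term.eval (MStruc T') s (Term.numSub s₀ B (.var x)) = _
      simp only [Term.numSub, if_neg hx]
      rw [eval_MStruc_numeral]
      show (s₀ x : ℕ) = if x ∈ B then s x else s₀ x
      exact (if_neg hx).symm
  | zero => intro B; rfl
  | succ a ih =>
    intro B
    show (MStruc T').succ (Term.eval (MStruc T') s (a.numSub s₀ B)) = _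
    rw [ih]
    rfl
  | add a₁ a₂ ih₁ ih₂ =>
    intro B
    show (MStruc T').add (Term.eval (MStruc T') s (a₁.numSub s₀ B))
      (Term.eval (MStruc T') s (a₂.numSub s₀ B)) = _
    rw [ih₁, ih₂]
    rfl
  | mul a₁ a₂ ih₁ ih₂ =>
    intro B
    show (MStruc T').mul (Term.eval (MStruc T') s (a₁.numSub s₀ B))
      (Term.eval (MStruc T') s (a₂.numSub s₀ B)) = _
    rw [ih₁, ih₂]
    rfl

lemma sat_MStruc_numSub (T' : Set LOO) :
    ∀ (ψ : LOO) (B : List ℕ) (s₀ : ℕ → ℕ) (s : ℕ → (MStruc T').U),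
      Sat (MStruc T') (ψ.numSub s₀ B) s ↔
        Sat (MStruc T') ψ (fun x => if x ∈ B then s x else s₀ x) := by
  intro ψ
  induction ψ with
  | eq t₁ t₂ =>
    intro B s₀ s
    show Term.eval (MStruc T') s (t₁.numSub s₀ B) = Term.eval (MStruc T') s (t₂.numSub s₀ B) ↔ _
    rw [eval_MStruc_numSub, eval_MStruc_numSub]
    exact Iff.rfl
  | imp φ₁ φ₂ ih₁ ih₂ =>
    intro B s₀ s
    exact imp_congr (ih₁ B s₀ s) (ih₂ B s₀ s)
  | not φ ih =>
    intro B s₀ s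
    exact not_congr (ih B s₀ s)
  | all x φ ih =>
    intro B s₀ s
    show (∀ a : (MStruc T').U, Sat (MStruc T') (φ.numSub s₀ (x :: B)) (Function.update s x a)) ↔
      (∀ a : (MStruc T').U, Sat (MStruc T') φ
        (Function.update (fun y => if y ∈ B then s y else s₀ y) x a))
    refine forall_congr' fun a => ?_
    rw [ih (x :: B) s₀ (Function.update s x a)]
    have he : (fun y => if y ∈ x :: B then Function.update s x a y else s₀ y) =
        Function.update (fun y => if y ∈ B then s y else s₀ y) x a := by
      funext y
      by_cases hyx : y = x
      · subst hyx
        rw [Function.update_self, Function.update_self]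
        exact if_pos (List.mem_cons_self : y ∈ y :: B)
      · rw [Function.update_of_ne hyx]
        by_cases hyB : y ∈ B
        · rw [Function.update_of_ne hyx]
          exact (if_pos (List.mem_cons_of_mem _ hyB)).trans (if_pos hyB).symm
        · rw [Function.update_of_ne hyx]
          exact (if_neg (show y ∉ x :: B by simp [List.mem_cons, hyx, hyB])).trans (if_neg hyB).symm
    rw [he]
  | op α φ ih =>
    intro B s₀ s
    show Models (cut T' α) (assignSub s (φ.numSub s₀ B)) ↔
      Models (cut T' α) (assignSub (fun x => if x ∈ B then s x else s₀ x) φ)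
    have he : assignSub s (φ.numSub s₀ B) =
        assignSub (fun x => if x ∈ B then s x else s₀ x) φ :=
      Formula.numSub_numSub s₀ s B φ []
    rw [he]

lemma eval_upStruc (M : PreStruc Ord2) (f : LEA → LOO) (s : ℕ → M.U) :
    ∀ a : Term, Term.eval (upStruc M f) s a = Term.eval M s a := by
  intro a
  induction a with
  | var x => rfl
  | zero => rfl
  | succ a ih =>
    show (upStruc M f).succ (Term.eval (upStruc M f) s a) = M.succ (Term.eval M s a)
    rw [ih]
    rfl
  | add a₁ a₂ ih₁ ih₂ =>
    show (upStruc M f).add (Term.eval (upStruc M f) s a₁) (Term.eval (upStruc M f) s a₂) =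
      M.add (Term.eval M s a₁) (Term.eval M s a₂)
    rw [ih₁, ih₂]
    rfl
  | mul a₁ a₂ ih₁ ih₂ =>
    show (upStruc M f).mul (Term.eval (upStruc M f) s a₁) (Term.eval (upStruc M f) s a₂) =
      M.mul (Term.eval M s a₁) (Term.eval M s a₂)
    rw [ih₁, ih₂]
    rfl

lemma sat_upStruc (M : PreStruc Ord2) (X : Set Ord2) :
    ∀ (φ : LEA) (s : ℕ → M.U), Sat (upStruc M (stratify X)) φ s ↔ Sat M (stratify X φ) s := by
  intro φ
  induction φ with
  | eq t₁ t₂ =>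
    intro s
    show Term.eval (upStruc M (stratify X)) s t₁ = Term.eval (upStruc M (stratify X)) s t₂ ↔ _
    rw [eval_upStruc, eval_upStruc]
    exact Iff.rfl
  | imp φ₁ φ₂ ih₁ ih₂ =>
    intro s
    simp only [stratify]
    exact imp_congr (ih₁ s) (ih₂ s)
  | not φ ih =>
    intro s
    simp only [stratify]
    exact not_congr (ih s)
  | all x φ ih =>
    intro s
    simp only [stratify]
    exact forall_congr' fun a => ih (Function.update s x a)
  | op K φ ih =>
    intro s
    cases K
    exact Iff.rfl

lemma models_alphaVariant {Op : Type} {T'' : Set (Formula Op)} {χ χ' : Formula Op}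
    (h : χ.alpha [] χ') (hm : Models T'' χ) : Models T'' χ' := by
  intro N hN hsat s
  exact (sat_alpha hN χ χ' [] s s h (fun u v hm' _ _ => by rw [show u = v from hm'])).1
    (hm N hN hsat s)

lemma isStruc_up (T' : Set LOO) (X : Set Ord2) :
    IsStruc (upStruc (MStruc T') (stratify X)) := by
  refine ⟨?_, ?_, ?_⟩
  · intro K φ s t h
    have he : assignSub s (stratify X φ) = assignSub t (stratify X φ) := by
      apply Formula.numSub_congr
      intro v hv _
      rw [free_stratify] at hv
      exact h v hv
    show Sat (MStruc T') (stratify X (.op () φ)) s ↔ Sat (MStruc T') (stratify X (.op () φ)) t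
    simp only [stratify]
    show Models (cut T' (leastIn (X \ (stratify X φ).On))) (assignSub s (stratify X φ)) ↔
      Models (cut T' (leastIn (X \ (stratify X φ).On))) (assignSub t (stratify X φ))
    rw [he]
  · intro K φ ψ s h
    obtain ⟨hal, hOn⟩ := stratify_alpha X φ ψ [] h
    have halv : (assignSub s (stratify X φ)).alpha [] (assignSub s (stratify X ψ)) := by
      have := Formula.numSub_alpha s (stratify X φ) (stratify X ψ) [] hal
      simpa [assignSub] using this
    show Sat (MStruc T') (stratify X (.op () φ)) s ↔ Sat (MStruc T') (stratify X (.op () ψ)) s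
    simp only [stratify]
    show Models (cut T' (leastIn (X \ (stratify X φ).On))) (assignSub s (stratify X φ)) ↔
      Models (cut T' (leastIn (X \ (stratify X ψ).On))) (assignSub s (stratify X ψ))
    rw [hOn]
    constructor
    · exact models_alphaVariant halv
    · refine models_alphaVariant ?_
      have := Formula.alpha_swap _ _ [] halv
      simpa using this
  · intro K φ x y s h
    show Sat (MStruc T') (stratify X (.op () (φ.subst x (.var y)))) s ↔
      Sat (MStruc T') (stratify X (.op () φ)) (Function.update s x (s y))
    simp only [stratify]
    show Models (cut T' (leastIn (X \ (stratify X (φ.subst x (.var y))).On)))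
        (assignSub s (stratify X (φ.subst x (.var y)))) ↔
      Models (cut T' (leastIn (X \ (stratify X φ).On)))
        (assignSub (Function.update s x (s y)) (stratify X φ))
    rw [stratify_subst, Formula.on_subst]
    have he : assignSub s ((stratify X φ).subst x (.var y)) =
        assignSub (Function.update s x (s y)) (stratify X φ) :=
      Formula.numSub_subst s ((stratify X φ).subst x (.var y) |> fun _ => stratify X φ) []
        (substitutable_stratify X φ h) (List.not_mem_nil : x ∉ []) (List.not_mem_nil : y ∉ [])
    rw [he]

lemma sat_alls {Op : Type} (M : PreStruc Op) (φ : Formula Op) (h : ∀ s, Sat M φ s) :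
    ∀ (l : List ℕ) (s : ℕ → M.U), Sat M (Formula.alls l φ) s := by
  intro l
  induction l with
  | nil => exact h
  | cons x l ih =>
    intro s
    show ∀ a : M.U, Sat M (Formula.alls l φ) (Function.update s x a)
    intro a
    exact ih (Function.update s x a)

end Aux6

/-- `E₁ ∪ (Assigned Validity)` is upgeneric. -/
theorem E1_union_assignedValidity_upgeneric :
    Upgeneric (E1 ∪ AssignedValidity) := by
  intro T hT hsub χ hχ
  obtain ⟨φ₀, hφ₀, f, ⟨X, hXinf, rfl⟩, rfl⟩ := hχ
  rcases hφ₀ with hE1 | hAV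
  · -- E₁ case
    obtain ⟨φ, hval, hsent, l, rfl⟩ := hE1
    intro s
    rw [stratify_alls]
    refine sat_alls _ _ ?_ l s
    intro s'
    show Sat (MStruc (oplus T)) (stratify X (.op () φ)) s'
    simp only [KK, stratify]
    show Models (cut (oplus T) (leastIn (X \ (stratify X φ).On)))
      (assignSub s' (stratify X φ))
    intro N hN hsat u
    refine hsat _ ⟨?_, ?_⟩ u
    · refine ⟨assignSub s' φ, hsub (Or.inr ⟨φ, s', hval, rfl⟩), stratify X,
        ⟨X, hXinf, rfl⟩, ?_⟩
      exact (stratify_numSub X s' φ []).symm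
    · intro β hβ
      simp only [assignSub] at hβ
      rw [Formula.on_numSub (s := (s' : ℕ → ℕ))] at hβ
      exact on_stratify_lt X φ (stratify X φ).On (subset_refl _)
        ((hXinf.diff (Formula.on_finite _)).nonempty) β hβ
  · -- Assigned Validity case
    obtain ⟨φ, s₀, hval, rfl⟩ := hAV
    intro s
    show Sat (MStruc (oplus T)) (stratify X (Formula.numSub s₀ [] φ)) s
    rw [stratify_numSub]
    have h1 := hval (upStruc (MStruc (oplus T)) (stratify X)) (isStruc_up _ _) s₀
    have h2 := (sat_upStruc (MStruc (oplus T)) X φ s₀).1 h1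
    refine (sat_MStruc_numSub (oplus T) (stratify X φ) [] s₀ s).2 ?_
    have he : (fun x => if x ∈ ([] : List ℕ) then s x else s₀ x) = s₀ := by
      funext x
      simp
      rfl
    rw [he]
    exact h2

end FCT
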